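/- arXiv:1704.02503 — 4 statements merged into one kernel-verified Lean document; each statement's English description precedes it below -/
import Mathlib

section
/- Let d ∈ ℕ. Let Q_0 be a Borel measure on ℝ^d with Q_0({0}) = 0 and ∫_{ℝ^d} min(1, ‖x‖²) dQ_0(x) < ∞. Let (μ_n)_{n∈ℕ} be Borel measures on ℝ^d × ℝ^d such that for every n and every Borel set A ⊆ ℝ^d, μ_n({(x,y) : x ∈ A, x ≠ 0}) = Q_0(A ∖ {0}) and μ_n({(x,y) : y ∈ A, y ≠ 0}) = Q_0(A ∖ {0}). Assume that for every δ > 0, lim_{n→∞} μ_n({(x,y) : ‖x‖·‖y‖ > δ}) = 0. Then lim_{n→∞} ∫_{{(x,y) : 0 < ‖x‖² + ‖y‖² ≤ 1}} ‖x‖·‖y‖ dμ_n(x,y) = 0. -/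
open MeasureTheory Filter
open scoped ENNReal

/-- Let `Q₀` be a Lévy-type measure on `ℝ^d` (no mass at `0` and
`∫ min(1,‖x‖²) dQ₀ < ∞`) and let `μ_n` be measures on `ℝ^d × ℝ^d` whose two coordinate
marginals, away from the origin, both equal `Q₀`.  If `μ_n({‖x‖·‖y‖ > δ}) → 0` for every
`δ > 0`, then `∫_{0 < ‖x‖² + ‖y‖² ≤ 1} ‖x‖·‖y‖ dμ_n → 0`. -/
theorem stmt_3 {d : ℕ}
    (Q₀ : Measure (EuclideanSpace ℝ (Fin d)))
    (hQ0 : Q₀ {0} = 0)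
    (hQint : ∫⁻ x, ENNReal.ofReal (min 1 (‖x‖ ^ 2)) ∂Q₀ < ∞)
    (μ : ℕ → Measure (EuclideanSpace ℝ (Fin d) × EuclideanSpace ℝ (Fin d)))
    (hmarg1 : ∀ (n : ℕ) (A : Set (EuclideanSpace ℝ (Fin d))), MeasurableSet A →
      μ n {q | q.1 ∈ A ∧ q.1 ≠ 0} = Q₀ (A \ {0}))
    (hmarg2 : ∀ (n : ℕ) (A : Set (EuclideanSpace ℝ (Fin d))), MeasurableSet A →
      μ n {q | q.2 ∈ A ∧ q.2 ≠ 0} = Q₀ (A \ {0}))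
    (hsmall : ∀ δ : ℝ, 0 < δ →
      Tendsto (fun n => μ n {q | δ < ‖q.1‖ * ‖q.2‖}) atTop (nhds 0)) :
    Tendsto (fun n =>
        ∫⁻ q in {q : EuclideanSpace ℝ (Fin d) × EuclideanSpace ℝ (Fin d) |
            0 < ‖q.1‖ ^ 2 + ‖q.2‖ ^ 2 ∧ ‖q.1‖ ^ 2 + ‖q.2‖ ^ 2 ≤ 1},
          ENNReal.ofReal (‖q.1‖ * ‖q.2‖) ∂(μ n))
      atTop (nhds 0) := by
  classical
  set E := EuclideanSpace ℝ (Fin d) with hEdef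
  -- measurability helpers
  have hn1 : Measurable fun q : E × E => ‖q.1‖ := continuous_fst.norm.measurable
  have hn2 : Measurable fun q : E × E => ‖q.2‖ := continuous_snd.norm.measurable
  have hnorm : Measurable fun y : E => ‖y‖ := continuous_norm.measurable
  have hne1 : MeasurableSet {q : E × E | q.1 ≠ 0} :=
    ((measurableSet_singleton (0 : E)).preimage measurable_fst).compl
  have hne2 : MeasurableSet {q : E × E | q.2 ≠ 0} :=
    ((measurableSet_singleton (0 : E)).preimage measurable_snd).compl
  -- the marginal maps are Q₀
  have key1 : ∀ n, Measure.map Prod.fst ((μ n).restrict {q : E × E | q.1 ≠ 0}) = Q₀ := by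
    intro n
    ext A hA
    rw [Measure.map_apply measurable_fst hA, Measure.restrict_apply (hA.preimage measurable_fst)]
    have hset : Prod.fst ⁻¹' A ∩ {q : E × E | q.1 ≠ 0} = {q : E × E | q.1 ∈ A ∧ q.1 ≠ 0} := rfl
    rw [hset, hmarg1 n A hA, measure_diff_null hQ0]
  have key2 : ∀ n, Measure.map Prod.snd ((μ n).restrict {q : E × E | q.2 ≠ 0}) = Q₀ := by
    intro n
    ext A hA
    rw [Measure.map_apply measurable_snd hA, Measure.restrict_apply (hA.preimage measurable_snd)]
    have hset : Prod.snd ⁻¹' A ∩ {q : E × E | q.2 ≠ 0} = {q : E × E | q.2 ∈ A ∧ q.2 ≠ 0} := rfl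
    rw [hset, hmarg2 n A hA, measure_diff_null hQ0]
  -- integrals of functions of one coordinate vanishing at 0
  have lin1 : ∀ (n : ℕ) (F : E → ℝ≥0∞), Measurable F → F 0 = 0 →
      ∫⁻ q : E × E, F q.1 ∂(μ n) = ∫⁻ y, F y ∂Q₀ := by
    intro n F hF hF0
    calc ∫⁻ q : E × E, F q.1 ∂(μ n)
        = ∫⁻ q : E × E, ({q : E × E | q.1 ≠ 0}).indicator (fun q => F q.1) q ∂(μ n) := by
          refine lintegral_congr fun q => ?_
          by_cases h : q.1 = (0 : E)
          · simp [Set.indicator, h, hF0]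
          · simp [Set.indicator, h]
      _ = ∫⁻ q : E × E in {q : E × E | q.1 ≠ 0}, F q.1 ∂(μ n) :=
          lintegral_indicator hne1 _
      _ = ∫⁻ y, F y ∂(Measure.map Prod.fst ((μ n).restrict {q : E × E | q.1 ≠ 0})) :=
          (lintegral_map hF measurable_fst).symm
      _ = ∫⁻ y, F y ∂Q₀ := by rw [key1 n]
  have lin2 : ∀ (n : ℕ) (F : E → ℝ≥0∞), Measurable F → F 0 = 0 →
      ∫⁻ q : E × E, F q.2 ∂(μ n) = ∫⁻ y, F y ∂Q₀ := by
    intro n F hF hF0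
    calc ∫⁻ q : E × E, F q.2 ∂(μ n)
        = ∫⁻ q : E × E, ({q : E × E | q.2 ≠ 0}).indicator (fun q => F q.2) q ∂(μ n) := by
          refine lintegral_congr fun q => ?_
          by_cases h : q.2 = (0 : E)
          · simp [Set.indicator, h, hF0]
          · simp [Set.indicator, h]
      _ = ∫⁻ q : E × E in {q : E × E | q.2 ≠ 0}, F q.2 ∂(μ n) :=
          lintegral_indicator hne2 _
      _ = ∫⁻ y, F y ∂(Measure.map Prod.snd ((μ n).restrict {q : E × E | q.2 ≠ 0})) :=
          (lintegral_map hF measurable_snd).symm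
      _ = ∫⁻ y, F y ∂Q₀ := by rw [key2 n]
  rw [ENNReal.tendsto_nhds_zero]
  intro ε hε
  have h5 : (0 : ℝ≥0∞) < ε / 5 := ENNReal.div_pos hε.ne' (by norm_num)
  -- the measure with density ‖y‖²
  set ν : Measure E := Q₀.withDensity (fun y => ENNReal.ofReal (‖y‖ ^ 2)) with hνdef
  set A : ℕ → Set E := fun k => {y : E | y ≠ 0 ∧ ‖y‖ ≤ ((k : ℝ) + 1)⁻¹} with hAdef
  have hAm : ∀ k, MeasurableSet (A k) := by
    intro k
    exact ((measurableSet_singleton (0 : E)).compl).inter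
      (hnorm measurableSet_Iic)
  have hAanti : Antitone A := by
    intro k l hkl y hy
    refine ⟨hy.1, hy.2.trans ?_⟩
    have h1 : (0 : ℝ) < (k : ℝ) + 1 := by positivity
    have h2 : (k : ℝ) + 1 ≤ (l : ℝ) + 1 := by
      have := (Nat.cast_le (α := ℝ)).mpr hkl; linarith
    exact inv_anti₀ h1 h2
  have hAempty : ⋂ k, A k = ∅ := by
    ext y
    simp only [Set.mem_iInter, Set.mem_empty_iff_false, iff_false]
    intro h
    have hy0 : y ≠ 0 := (h 0).1
    have hypos : 0 < ‖y‖ := norm_pos_iff.mpr hy0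
    obtain ⟨k, hk⟩ := exists_nat_gt (‖y‖⁻¹)
    have hk1 : ‖y‖⁻¹ < (k : ℝ) + 1 := hk.trans (by linarith)
    have hpos2 : (0 : ℝ) < (k : ℝ) + 1 := by positivity
    have : ((k : ℝ) + 1)⁻¹ < ‖y‖ := by
      nlinarith [mul_inv_cancel₀ hypos.ne', mul_inv_cancel₀ hpos2.ne',
        mul_lt_mul_of_pos_left hk1 hypos, inv_nonneg.mpr hpos2.le]
    exact absurd ((h k).2) (not_le.mpr this)
  have hνA0 : ν (A 0) ≠ ∞ := by
    rw [hνdef, withDensity_apply _ (hAm 0)]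
    have hle : ∫⁻ y in A 0, ENNReal.ofReal (‖y‖ ^ 2) ∂Q₀
        ≤ ∫⁻ y in A 0, ENNReal.ofReal (min 1 (‖y‖ ^ 2)) ∂Q₀ := by
      refine setLIntegral_mono ((measurable_const.min (hnorm.pow_const 2)).ennreal_ofReal)
        fun y hy => ?_
      refine ENNReal.ofReal_le_ofReal ?_
      have : ‖y‖ ^ 2 ≤ 1 := by
        have h1 : ‖y‖ ≤ 1 := hy.2.trans (by norm_num)
        nlinarith [norm_nonneg y]
      rw [min_eq_right this]
    exact ((hle.trans (setLIntegral_le_lintegral _ _)).trans_lt hQint).ne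
  have htend : Tendsto (fun k => ν (A k)) atTop (nhds 0) := by
    have := tendsto_measure_iInter_atTop (μ := ν) (s := A)
      (fun k => (hAm k).nullMeasurableSet) hAanti ⟨0, hνA0⟩
    rwa [hAempty, measure_empty] at this
  obtain ⟨k, hk⟩ := (ENNReal.tendsto_nhds_zero.mp htend (ε / 5) h5).exists
  set ε₀ : ℝ := ((k : ℝ) + 1)⁻¹ with hε₀def
  have hε₀pos : 0 < ε₀ := by positivity
  have hε₀le1 : ε₀ ≤ 1 := by
    rw [hε₀def]
    rw [inv_le_one_iff₀]; right; linarith [Nat.cast_nonneg (α := ℝ) k]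
  -- the tail mass
  set C : ℝ≥0∞ := Q₀ {y : E | ε₀ < ‖y‖} with hCdef
  have hCm : MeasurableSet {y : E | ε₀ < ‖y‖} := hnorm measurableSet_Ioi
  have hCfin : C ≠ ∞ := by
    intro hC
    have hmpos : 0 < min 1 (ε₀ ^ 2) := by positivity
    have h1 : ENNReal.ofReal (min 1 (ε₀ ^ 2)) * C
        = ∫⁻ y in {y : E | ε₀ < ‖y‖}, ENNReal.ofReal (min 1 (ε₀ ^ 2)) ∂Q₀ := by
      rw [setLIntegral_const]
    have h2 : ∫⁻ y in {y : E | ε₀ < ‖y‖}, ENNReal.ofReal (min 1 (ε₀ ^ 2)) ∂Q₀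
        ≤ ∫⁻ y in {y : E | ε₀ < ‖y‖}, ENNReal.ofReal (min 1 (‖y‖ ^ 2)) ∂Q₀ := by
      refine setLIntegral_mono ((measurable_const.min (hnorm.pow_const 2)).ennreal_ofReal)
        fun y hy => ?_
      refine ENNReal.ofReal_le_ofReal ?_
      have : ε₀ ^ 2 ≤ ‖y‖ ^ 2 := by
        have := hy.out
        nlinarith [hε₀pos]
      exact min_le_min le_rfl this
    have h3 : ENNReal.ofReal (min 1 (ε₀ ^ 2)) * C
        ≤ ∫⁻ x, ENNReal.ofReal (min 1 (‖x‖ ^ 2)) ∂Q₀ := by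
      rw [h1]; exact h2.trans (setLIntegral_le_lintegral _ _)
    have h4 := h3.trans_lt hQint
    rw [hC, ENNReal.mul_top (ENNReal.ofReal_pos.mpr hmpos).ne'] at h4
    exact (lt_irrefl _ h4)
  -- choose r with ofReal r * C ≤ ε/5
  obtain ⟨r, hr0, hrC⟩ : ∃ r : ℝ, 0 < r ∧ ENNReal.ofReal r * C ≤ ε / 5 := by
    by_cases hC0 : C = 0
    · exact ⟨1, one_pos, by simp [hC0]⟩
    · set t : ℝ≥0∞ := (ε / 5) / C with htdef
      have ht0 : t ≠ 0 := by
        intro h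
        rcases ENNReal.div_eq_zero_iff.mp h with h' | h'
        · exact h5.ne' h'
        · exact hCfin h'
      have hmin0 : min 1 t ≠ 0 := by
        simp only [ne_eq, min_eq_iff]
        rintro (⟨h, -⟩ | ⟨h, -⟩)
        · exact one_ne_zero h
        · exact ht0 h
      have hminfin : min 1 t ≠ ∞ := by
        refine ne_top_of_le_ne_top (by norm_num) (min_le_left _ _)
      refine ⟨(min 1 t).toReal, ENNReal.toReal_pos hmin0 hminfin, ?_⟩
      rw [ENNReal.ofReal_toReal hminfin]
      calc min 1 t * C ≤ t * C := mul_le_mul_left (min_le_right _ _) _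
        _ = ε / 5 := ENNReal.div_mul_cancel hC0 hCfin
  set δ : ℝ := r * ε₀ with hδdef
  have hδpos : 0 < δ := mul_pos hr0 hε₀pos
  have hδler : δ ≤ r := by
    rw [hδdef]
    nlinarith
  have hev := ENNReal.tendsto_nhds_zero.mp (hsmall δ hδpos) (ε / 5) h5
  filter_upwards [hev] with n hn
  -- set notation
  set S : Set (E × E) := {q : E × E |
      0 < ‖q.1‖ ^ 2 + ‖q.2‖ ^ 2 ∧ ‖q.1‖ ^ 2 + ‖q.2‖ ^ 2 ≤ 1} with hSdef
  have hSm : MeasurableSet S := by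
    have hm : Measurable fun q : E × E => ‖q.1‖ ^ 2 + ‖q.2‖ ^ 2 :=
      (hn1.pow_const 2).add (hn2.pow_const 2)
    exact (measurableSet_lt measurable_const hm).inter (measurableSet_le hm measurable_const)
  set B : Set (E × E) := {q : E × E | δ < ‖q.1‖ * ‖q.2‖} with hBdef
  have hBm : MeasurableSet B := measurableSet_lt measurable_const (hn1.mul hn2)
  set A1 : Set (E × E) := {q : E × E | q.1 ≠ 0 ∧ ‖q.1‖ ≤ ε₀} with hA1def
  set A2 : Set (E × E) := {q : E × E | q.2 ≠ 0 ∧ ‖q.2‖ ≤ ε₀} with hA2def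
  have hA1m : MeasurableSet A1 := hne1.inter (hn1 measurableSet_Iic)
  have hA2m : MeasurableSet A2 := hne2.inter (hn2 measurableSet_Iic)
  set T1 : Set (E × E) := {q : E × E | ε₀ < ‖q.1‖} with hT1def
  set T2 : Set (E × E) := {q : E × E | ε₀ < ‖q.2‖} with hT2def
  have hT1m : MeasurableSet T1 := hn1 measurableSet_Ioi
  have hT2m : MeasurableSet T2 := hn2 measurableSet_Ioi
  set g : E × E → ℝ≥0∞ := fun q => ENNReal.ofReal (‖q.1‖ * ‖q.2‖) with hgdef
  -- pointwise bound
  have hpoint : ∀ q : E × E, S.indicator g q ≤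
      B.indicator (fun _ => 1) q
      + A1.indicator (fun q => ENNReal.ofReal (‖q.1‖ ^ 2)) q
      + A2.indicator (fun q => ENNReal.ofReal (‖q.2‖ ^ 2)) q
      + T1.indicator (fun _ => ENNReal.ofReal r) q
      + T2.indicator (fun _ => ENNReal.ofReal r) q := by
    intro q
    by_cases hqS : q ∈ S
    · rw [Set.indicator_of_mem hqS]
      have hx1 : ‖q.1‖ ≤ 1 := by
        have := hqS.2
        nlinarith [norm_nonneg q.1, norm_nonneg q.2, sq_nonneg ‖q.2‖]
      have hy1 : ‖q.2‖ ≤ 1 := by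
        have := hqS.2
        nlinarith [norm_nonneg q.1, norm_nonneg q.2, sq_nonneg ‖q.1‖]
      by_cases hqB : q ∈ B
      · -- bound by B term
        have h1 : g q ≤ B.indicator (fun _ => (1 : ℝ≥0∞)) q := by
          rw [Set.indicator_of_mem hqB]
          calc g q ≤ ENNReal.ofReal 1 := by
                refine ENNReal.ofReal_le_ofReal ?_
                nlinarith [norm_nonneg q.1, norm_nonneg q.2]
            _ = 1 := ENNReal.ofReal_one
        exact ((((h1.trans (self_le_add_right _ _)).trans (self_le_add_right _ _)).trans
          (self_le_add_right _ _)).trans (self_le_add_right _ _))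
      · -- f ≤ δ
        have hfδ : ‖q.1‖ * ‖q.2‖ ≤ δ := not_lt.mp hqB
        by_cases hx0 : q.1 = 0
        · simp [hgdef, norm_eq_zero.mpr hx0]
        by_cases hy0 : q.2 = 0
        · simp [hgdef, norm_eq_zero.mpr hy0]
        by_cases hxε : ε₀ < ‖q.1‖
        · -- tail term T1
          have h1 : g q ≤ T1.indicator (fun _ => ENNReal.ofReal r) q := by
            rw [Set.indicator_of_mem (show q ∈ T1 from hxε)]
            exact ENNReal.ofReal_le_ofReal (hfδ.trans hδler)
          exact (h1.trans (self_le_add_left _ _)).trans (self_le_add_right _ _)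
        by_cases hyε : ε₀ < ‖q.2‖
        · have h1 : g q ≤ T2.indicator (fun _ => ENNReal.ofReal r) q := by
            rw [Set.indicator_of_mem (show q ∈ T2 from hyε)]
            exact ENNReal.ofReal_le_ofReal (hfδ.trans hδler)
          exact h1.trans (self_le_add_left _ _)
        · -- both small
          have hqA1 : q ∈ A1 := ⟨hx0, not_lt.mp hxε⟩
          have hqA2 : q ∈ A2 := ⟨hy0, not_lt.mp hyε⟩
          have h1 : g q ≤ A1.indicator (fun q => ENNReal.ofReal (‖q.1‖ ^ 2)) q
              + A2.indicator (fun q => ENNReal.ofReal (‖q.2‖ ^ 2)) q := by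
            rw [Set.indicator_of_mem hqA1, Set.indicator_of_mem hqA2, hgdef,
              ← ENNReal.ofReal_add (by positivity) (by positivity)]
            refine ENNReal.ofReal_le_ofReal ?_
            nlinarith [sq_nonneg (‖q.1‖ - ‖q.2‖)]
          exact ((h1.trans (add_le_add_left (self_le_add_left _ _) _)).trans
            (self_le_add_right _ _)).trans (self_le_add_right _ _)
    · rw [Set.indicator_of_notMem hqS]
      exact zero_le
  -- integrate the pointwise bound
  have hmeasg : Measurable g := (hn1.mul hn2).ennreal_ofReal
  have hm1 : Measurable (A1.indicator (fun q : E × E => ENNReal.ofReal (‖q.1‖ ^ 2))) :=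
    ((hn1.pow_const 2).ennreal_ofReal).indicator hA1m
  have hm2 : Measurable (A2.indicator (fun q : E × E => ENNReal.ofReal (‖q.2‖ ^ 2))) :=
    ((hn2.pow_const 2).ennreal_ofReal).indicator hA2m
  have hmB : Measurable (B.indicator (fun _ : E × E => (1 : ℝ≥0∞))) :=
    measurable_const.indicator hBm
  have hmT1 : Measurable (T1.indicator (fun _ : E × E => ENNReal.ofReal r)) :=
    measurable_const.indicator hT1m
  have hmT2 : Measurable (T2.indicator (fun _ : E × E => ENNReal.ofReal r)) :=
    measurable_const.indicator hT2m
  -- compute each term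
  have hintB : ∫⁻ q, B.indicator (fun _ => (1 : ℝ≥0∞)) q ∂(μ n) = μ n B := by
    rw [lintegral_indicator_const hBm, one_mul]
  have hintA1 : ∫⁻ q, A1.indicator (fun q : E × E => ENNReal.ofReal (‖q.1‖ ^ 2)) q ∂(μ n)
      = ν (A k) := by
    have hFm : Measurable ((A k).indicator (fun y : E => ENNReal.ofReal (‖y‖ ^ 2))) :=
      ((hnorm.pow_const 2).ennreal_ofReal).indicator (hAm k)
    have hF0 : (A k).indicator (fun y : E => ENNReal.ofReal (‖y‖ ^ 2)) 0 = 0 := by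
      rw [Set.indicator_of_notMem]
      simp [hAdef]
    have hcomp : ∀ q : E × E,
        A1.indicator (fun q : E × E => ENNReal.ofReal (‖q.1‖ ^ 2)) q
        = (A k).indicator (fun y : E => ENNReal.ofReal (‖y‖ ^ 2)) q.1 := by
      intro q
      by_cases h : q.1 ∈ A k
      · rw [Set.indicator_of_mem h, Set.indicator_of_mem (by exact h)]
      · rw [Set.indicator_of_notMem h, Set.indicator_of_notMem (by exact h)]
    calc ∫⁻ q, A1.indicator (fun q : E × E => ENNReal.ofReal (‖q.1‖ ^ 2)) q ∂(μ n)
        = ∫⁻ q : E × E, (A k).indicator (fun y : E => ENNReal.ofReal (‖y‖ ^ 2)) q.1 ∂(μ n) :=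
          lintegral_congr hcomp
      _ = ∫⁻ y, (A k).indicator (fun y : E => ENNReal.ofReal (‖y‖ ^ 2)) y ∂Q₀ :=
          lin1 n _ hFm hF0
      _ = ∫⁻ y in A k, ENNReal.ofReal (‖y‖ ^ 2) ∂Q₀ := lintegral_indicator (hAm k) _
      _ = ν (A k) := (withDensity_apply _ (hAm k)).symm
  have hintA2 : ∫⁻ q, A2.indicator (fun q : E × E => ENNReal.ofReal (‖q.2‖ ^ 2)) q ∂(μ n)
      = ν (A k) := by
    have hFm : Measurable ((A k).indicator (fun y : E => ENNReal.ofReal (‖y‖ ^ 2))) :=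
      ((hnorm.pow_const 2).ennreal_ofReal).indicator (hAm k)
    have hF0 : (A k).indicator (fun y : E => ENNReal.ofReal (‖y‖ ^ 2)) 0 = 0 := by
      rw [Set.indicator_of_notMem]
      simp [hAdef]
    have hcomp : ∀ q : E × E,
        A2.indicator (fun q : E × E => ENNReal.ofReal (‖q.2‖ ^ 2)) q
        = (A k).indicator (fun y : E => ENNReal.ofReal (‖y‖ ^ 2)) q.2 := by
      intro q
      by_cases h : q.2 ∈ A k
      · rw [Set.indicator_of_mem h, Set.indicator_of_mem (by exact h)]
      · rw [Set.indicator_of_notMem h, Set.indicator_of_notMem (by exact h)]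
    calc ∫⁻ q, A2.indicator (fun q : E × E => ENNReal.ofReal (‖q.2‖ ^ 2)) q ∂(μ n)
        = ∫⁻ q : E × E, (A k).indicator (fun y : E => ENNReal.ofReal (‖y‖ ^ 2)) q.2 ∂(μ n) :=
          lintegral_congr hcomp
      _ = ∫⁻ y, (A k).indicator (fun y : E => ENNReal.ofReal (‖y‖ ^ 2)) y ∂Q₀ :=
          lin2 n _ hFm hF0
      _ = ∫⁻ y in A k, ENNReal.ofReal (‖y‖ ^ 2) ∂Q₀ := lintegral_indicator (hAm k) _
      _ = ν (A k) := (withDensity_apply _ (hAm k)).symm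
  have hT1meas : μ n T1 = C := by
    have hset : T1 = {q : E × E | q.1 ∈ {y : E | ε₀ < ‖y‖} ∧ q.1 ≠ 0} := by
      ext q
      simp only [hT1def, Set.mem_setOf_eq]
      constructor
      · intro h
        refine ⟨h, ?_⟩
        intro h0
        rw [h0, norm_zero] at h
        exact absurd h (not_lt.mpr hε₀pos.le)
      · exact fun h => h.1
    rw [hset, hmarg1 n _ hCm, measure_diff_null hQ0]
  have hT2meas : μ n T2 = C := by
    have hset : T2 = {q : E × E | q.2 ∈ {y : E | ε₀ < ‖y‖} ∧ q.2 ≠ 0} := by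
      ext q
      simp only [hT2def, Set.mem_setOf_eq]
      constructor
      · intro h
        refine ⟨h, ?_⟩
        intro h0
        rw [h0, norm_zero] at h
        exact absurd h (not_lt.mpr hε₀pos.le)
      · exact fun h => h.1
    rw [hset, hmarg2 n _ hCm, measure_diff_null hQ0]
  have hintT1 : ∫⁻ q, T1.indicator (fun _ => ENNReal.ofReal r) q ∂(μ n)
      = ENNReal.ofReal r * C := by
    rw [lintegral_indicator_const hT1m, hT1meas]
  have hintT2 : ∫⁻ q, T2.indicator (fun _ => ENNReal.ofReal r) q ∂(μ n)
      = ENNReal.ofReal r * C := by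
    rw [lintegral_indicator_const hT2m, hT2meas]
  -- main chain
  calc ∫⁻ q in S, g q ∂(μ n)
      = ∫⁻ q, S.indicator g q ∂(μ n) := (lintegral_indicator hSm _).symm
    _ ≤ ∫⁻ q, (B.indicator (fun _ => 1) q
          + A1.indicator (fun q => ENNReal.ofReal (‖q.1‖ ^ 2)) q
          + A2.indicator (fun q => ENNReal.ofReal (‖q.2‖ ^ 2)) q
          + T1.indicator (fun _ => ENNReal.ofReal r) q
          + T2.indicator (fun _ => ENNReal.ofReal r) q) ∂(μ n) := lintegral_mono hpoint
    _ = μ n B + ν (A k) + ν (A k) + ENNReal.ofReal r * C + ENNReal.ofReal r * C := by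
        rw [lintegral_add_right _ hmT2, lintegral_add_right _ hmT1,
          lintegral_add_right _ hm2, lintegral_add_right _ hm1,
          hintB, hintA1, hintA2, hintT1, hintT2]
    _ ≤ ε / 5 + ε / 5 + ε / 5 + ε / 5 + ε / 5 := by
        gcongr
    _ = ε / 5 * 5 := by ring
    _ = ε := ENNReal.div_mul_cancel (by norm_num) (by norm_num)
end

section
/- Let (S, 𝒮, μ) be a σ-finite measure space, let l ∈ ℕ, and let g : S × ℝ^l → ℝ be square-integrable with respect to the product of μ and l-dimensional Lebesgue measure. Then for every sequence (t_n)_{n∈ℕ} ⊆ ℝ^l with ‖t_n‖_∞ → ∞, lim_{n→∞} ∫_S ∫_{ℝ^l} |g(a, s) · g(a, s − t_n)| ds dμ(a) = 0. -/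
open MeasureTheory Filter Set

private lemma amgm_aux (a b δ : ℝ) (hδ : 0 < δ) : a * b ≤ (δ * a ^ 2 + b ^ 2 / δ) / 2 := by
  have h := two_mul_le_add_sq (Real.sqrt δ * a) (b / Real.sqrt δ)
  have hs : 0 < Real.sqrt δ := Real.sqrt_pos.2 hδ
  have h1 : 2 * (Real.sqrt δ * a) * (b / Real.sqrt δ) = 2 * (a * b) := by field_simp
  have h2 : (Real.sqrt δ * a) ^ 2 = δ * a ^ 2 := by rw [mul_pow, Real.sq_sqrt hδ.le]
  have h3 : (b / Real.sqrt δ) ^ 2 = b ^ 2 / δ := by rw [div_pow, Real.sq_sqrt hδ.le]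
  rw [h1, h2, h3] at h
  linarith

/-- If `(S, μ)` is σ-finite and `g : S × ℝ^l → ℝ` is square-integrable
with respect to `μ ⊗ Leb`, then along any sequence `t_n` with `‖t_n‖_∞ → ∞` the
"decorrelation" integrals `∫_S ∫_{ℝ^l} |g(a,s) g(a,s-t_n)| ds μ(da)` tend to `0`. -/
theorem stmt_5 {S : Type*} [MeasurableSpace S] (μ : Measure S) [SigmaFinite μ] (l : ℕ)
    (g : S × (Fin l → ℝ) → ℝ) (hg : MemLp g 2 (μ.prod volume)) :
    ∀ t : ℕ → (Fin l → ℝ), Tendsto (fun n => ‖t n‖) atTop atTop →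
      Tendsto (fun n => ∫ a, ∫ s, |g (a, s) * g (a, s - t n)| ∂volume ∂μ)
        atTop (nhds 0) := by
  intro t ht
  set ρ : Measure (S × (Fin l → ℝ)) := μ.prod volume with hρdef
  set F : S × (Fin l → ℝ) → ℝ := fun p => |g p| with hFdef
  have hF : MemLp F 2 ρ := hg.abs
  have hFnn : ∀ p, 0 ≤ F p := fun p => abs_nonneg _
  have hF2 : Integrable (fun p => F p ^ 2) ρ := hF.integrable_sq
  -- translations are measure preserving
  have hT : ∀ v : Fin l → ℝ,
      MeasurePreserving (fun p : S × (Fin l → ℝ) => (p.1, p.2 - v)) ρ ρ :=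
    fun v => (MeasurePreserving.id μ).prod (measurePreserving_sub_right volume v)
  have hTe : ∀ v : Fin l → ℝ,
      MeasurableEmbedding (fun p : S × (Fin l → ℝ) => (p.1, p.2 - v)) :=
    fun v => ((MeasurableEquiv.refl S).prodCongr (MeasurableEquiv.subRight v)).measurableEmbedding
  have hFt : ∀ v : Fin l → ℝ, MemLp (fun p : S × (Fin l → ℝ) => F (p.1, p.2 - v)) 2 ρ :=
    fun v => hF.comp_measurePreserving (hT v)
  have hprod : ∀ (φ ψ : S × (Fin l → ℝ) → ℝ), MemLp φ 2 ρ → MemLp ψ 2 ρ →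
      Integrable (fun p => φ p * ψ p) ρ := by
    intro φ ψ hφ hψ
    exact memLp_one_iff_integrable.mp (hψ.smul hφ (r := 1) (hpqr := ⟨by
      rw [inv_one]
      exact ENNReal.inv_two_add_inv_two⟩))
  have hmul : ∀ v : Fin l → ℝ, Integrable (fun p => F p * F (p.1, p.2 - v)) ρ :=
    fun v => hprod _ _ hF (hFt v)
  -- Fubini rewriting
  have key : ∀ v : Fin l → ℝ, (∫ a, ∫ s, |g (a, s) * g (a, s - v)| ∂volume ∂μ)
      = ∫ p, F p * F (p.1, p.2 - v) ∂ρ := by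
    intro v
    rw [integral_prod _ (hmul v)]
    simp only [hFdef, abs_mul]
  set M2 : ℝ := ∫ p, F p ^ 2 ∂ρ with hM2def
  have hM2nn : 0 ≤ M2 := integral_nonneg fun p => sq_nonneg _
  -- composed squares integrate to the same values
  have hcompF : ∀ v : Fin l → ℝ, ∫ p, F (p.1, p.2 - v) ^ 2 ∂ρ = M2 :=
    fun v => (hT v).integral_comp (hTe v) (fun p => F p ^ 2)
  -- truncation
  set A : ℕ → Set (S × (Fin l → ℝ)) := fun R => {p | ‖p.2‖ ≤ (R : ℝ)} with hAdef
  have hAmeas : ∀ R, MeasurableSet (A R) := by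
    intro R
    exact measurableSet_le (measurable_snd.norm) measurable_const
  set r : ℕ → S × (Fin l → ℝ) → ℝ := fun R => (A R)ᶜ.indicator F with hrdef
  have hr : ∀ R, MemLp (r R) 2 ρ := fun R => hF.indicator (hAmeas R).compl
  have hrnn : ∀ R p, 0 ≤ r R p := fun R p => indicator_nonneg (fun q _ => hFnn q) p
  have hrle : ∀ R p, r R p ≤ F p := fun R p => indicator_le_self' (fun q _ => hFnn q) p
  have hr2 : ∀ R, Integrable (fun p => r R p ^ 2) ρ := fun R => (hr R).integrable_sq
  set τ : ℕ → ℝ := fun R => ∫ p, r R p ^ 2 ∂ρ with hτdef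
  have hτnn : ∀ R, 0 ≤ τ R := fun R => integral_nonneg fun p => sq_nonneg _
  have hcompr : ∀ (R : ℕ) (v : Fin l → ℝ), ∫ p, r R (p.1, p.2 - v) ^ 2 ∂ρ = τ R :=
    fun R v => (hT v).integral_comp (hTe v) (fun p => r R p ^ 2)
  have hrtmem : ∀ (R : ℕ) (v : Fin l → ℝ),
      MemLp (fun p : S × (Fin l → ℝ) => r R (p.1, p.2 - v)) 2 ρ :=
    fun R v => (hr R).comp_measurePreserving (hT v)
  have hrt2 : ∀ (R : ℕ) (v : Fin l → ℝ),
      Integrable (fun p => r R (p.1, p.2 - v) ^ 2) ρ := fun R v => (hrtmem R v).integrable_sq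
  -- τ tends to 0
  have hτ0 : Tendsto τ atTop (nhds 0) := by
    have hmono : Monotone A := by
      intro i j hij p hp
      have hp' : ‖p.2‖ ≤ (i : ℝ) := hp
      exact le_trans hp' (Nat.cast_le.mpr hij)
    have hunion : ⋃ R, A R = univ := by
      ext p
      simp only [mem_iUnion, mem_univ, iff_true, hAdef, mem_setOf_eq]
      exact exists_nat_ge ‖p.2‖
    have h1 : Tendsto (fun R => ∫ p in A R, F p ^ 2 ∂ρ) atTop (nhds M2) := by
      have := tendsto_setIntegral_of_monotone hAmeas hmono
        (by rw [hunion]; exact hF2.integrableOn)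
      rwa [hunion, setIntegral_univ] at this
    have hτeq : ∀ R, τ R = M2 - ∫ p in A R, F p ^ 2 ∂ρ := by
      intro R
      have hind : (fun p => r R p ^ 2) = (A R)ᶜ.indicator (fun p => F p ^ 2) := by
        funext p
        by_cases hp : p ∈ (A R)ᶜ
        · simp [hrdef, indicator_of_mem hp]
        · simp [hrdef, indicator_of_notMem hp]
      have := integral_add_compl (hAmeas R) hF2
      rw [hτdef]
      simp only [hind]
      rw [integral_indicator (hAmeas R).compl]
      linarith
    have h2 : Tendsto (fun R => M2 - ∫ p in A R, F p ^ 2 ∂ρ) atTop (nhds 0) := by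
      have := h1.const_sub M2
      rwa [sub_self] at this
    exact h2.congr fun R => (hτeq R).symm
  -- the main estimate
  have main : ∀ (R : ℕ) (δ : ℝ), 0 < δ → ∀ v : Fin l → ℝ, 2 * (R : ℝ) < ‖v‖ →
      (∫ p, F p * F (p.1, p.2 - v) ∂ρ) ≤ δ * M2 + τ R / δ := by
    intro R δ hδ v hv
    set Φ : S × (Fin l → ℝ) → ℝ := fun p =>
      (δ * F p ^ 2 + r R (p.1, p.2 - v) ^ 2 / δ) / 2 +
      (δ * F (p.1, p.2 - v) ^ 2 + r R p ^ 2 / δ) / 2 with hΦdef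
    have hΦint : Integrable Φ ρ := by
      apply Integrable.add
      · exact ((hF2.const_mul δ).add ((hrt2 R v).div_const δ)).div_const 2
      · apply Integrable.div_const
        apply Integrable.add
        · exact Integrable.const_mul ((hFt v).integrable_sq) δ
        · exact (hr2 R).div_const δ
    have hpt : ∀ p, F p * F (p.1, p.2 - v) ≤ Φ p := by
      intro p
      set h : S × (Fin l → ℝ) → ℝ := (A R).indicator F with hhdef
      have hsum : ∀ q, h q + r R q = F q := by
        intro q
        simp [hhdef, hrdef, Set.indicator_self_add_compl_apply]
      have hzero : h p * h (p.1, p.2 - v) = 0 := by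
        by_cases h1 : p ∈ A R
        · by_cases h2 : ((p.1, p.2 - v) : S × (Fin l → ℝ)) ∈ A R
          · exfalso
            have e1 : ‖p.2‖ ≤ (R : ℝ) := h1
            have e2 : ‖p.2 - v‖ ≤ (R : ℝ) := h2
            have : ‖v‖ ≤ ‖p.2‖ + ‖p.2 - v‖ := by
              have := norm_sub_le p.2 (p.2 - v)
              simpa using this
            linarith
          · simp [hhdef, indicator_of_notMem h2]
        · simp [hhdef, indicator_of_notMem h1]
      have hhnn : 0 ≤ h p := indicator_nonneg (fun q _ => hFnn q) p
      have hhle : h p ≤ F p := indicator_le_self' (fun q _ => hFnn q) p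
      have heq : F p * F (p.1, p.2 - v)
          = h p * r R (p.1, p.2 - v) + r R p * F (p.1, p.2 - v) := by
        have e1 := hsum p
        have e2 := hsum (p.1, p.2 - v)
        linear_combination (-F (p.1, p.2 - v)) * e1 - h p * e2 + hzero
      have b1 : h p * r R (p.1, p.2 - v) ≤ F p * r R (p.1, p.2 - v) :=
        mul_le_mul_of_nonneg_right hhle (hrnn R _)
      have b2 : F p * r R (p.1, p.2 - v) ≤ (δ * F p ^ 2 + r R (p.1, p.2 - v) ^ 2 / δ) / 2 :=
        amgm_aux _ _ _ hδ
      have b3 : r R p * F (p.1, p.2 - v) ≤ (δ * F (p.1, p.2 - v) ^ 2 + r R p ^ 2 / δ) / 2 := by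
        have := amgm_aux (F (p.1, p.2 - v)) (r R p) δ hδ
        linarith [this, mul_comm (r R p) (F (p.1, p.2 - v))]
      rw [heq, hΦdef]
      dsimp only
      linarith
    have hint : (∫ p, F p * F (p.1, p.2 - v) ∂ρ) ≤ ∫ p, Φ p ∂ρ :=
      integral_mono (hmul v) hΦint hpt
    have int1 : Integrable (fun p : S × (Fin l → ℝ) =>
        δ * F p ^ 2 + r R (p.1, p.2 - v) ^ 2 / δ) ρ :=
      (hF2.const_mul δ).add ((hrt2 R v).div_const δ)
    have int2 : Integrable (fun p : S × (Fin l → ℝ) =>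
        δ * F (p.1, p.2 - v) ^ 2 + r R p ^ 2 / δ) ρ :=
      (((hFt v).integrable_sq).const_mul δ).add ((hr2 R).div_const δ)
    have i1 : (∫ p, (δ * F p ^ 2 + r R (p.1, p.2 - v) ^ 2 / δ) ∂ρ) = δ * M2 + τ R / δ := by
      rw [integral_add (hF2.const_mul δ) ((hrt2 R v).div_const δ), integral_const_mul δ _,
        integral_div, hcompr R v]
    have i2 : (∫ p, (δ * F (p.1, p.2 - v) ^ 2 + r R p ^ 2 / δ) ∂ρ) = δ * M2 + τ R / δ := by
      rw [integral_add (((hFt v).integrable_sq).const_mul δ) ((hr2 R).div_const δ),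
        integral_const_mul δ _, integral_div, hcompF v]
    have hΦval : (∫ p, Φ p ∂ρ) = δ * M2 + τ R / δ := by
      simp only [hΦdef]
      rw [integral_add (int1.div_const 2) (int2.div_const 2), integral_div, integral_div,
        i1, i2]
      ring
    linarith [hint, hΦval.le]
  -- nonnegativity of the integrals
  have hInn : ∀ n, 0 ≤ ∫ a, ∫ s, |g (a, s) * g (a, s - t n)| ∂volume ∂μ := by
    intro n
    exact integral_nonneg fun a => integral_nonneg fun s => abs_nonneg _
  -- conclusion
  rw [NormedAddCommGroup.tendsto_nhds_zero]
  intro ε hε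
  set δ : ℝ := ε / (2 * (M2 + 1)) with hδdef
  have hδpos : 0 < δ := div_pos hε (by linarith)
  have hδsq : 0 < δ * δ := mul_pos hδpos hδpos
  obtain ⟨R, hR⟩ := (hτ0.eventually (eventually_lt_nhds hδsq)).exists
  have hev : ∀ᶠ n in atTop, 2 * (R : ℝ) < ‖t n‖ := ht.eventually_gt_atTop _
  filter_upwards [hev] with n hn
  have hτR : τ R / δ ≤ δ := by
    rw [div_le_iff₀ hδpos]
    exact hR.le
  have hb : (∫ a, ∫ s, |g (a, s) * g (a, s - t n)| ∂volume ∂μ) ≤ δ * M2 + δ := by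
    rw [key (t n)]
    exact le_trans (main R δ hδpos (t n) hn) (by linarith)
  have hlt : δ * M2 + δ < ε := by
    have : δ * (M2 + 1) = ε / 2 := by
      rw [hδdef]
      field_simp
    nlinarith
  rw [Real.norm_of_nonneg (hInn n)]
  linarith
end

section
/- Let (Z_t)_{t∈ℝ^l} be a real-valued strictly stationary random field on a probability space (Ω, ℱ, P). Suppose that for every sequence (t_n)_{n∈ℕ} ⊆ ℝ^l with ‖t_n‖_∞ → ∞, lim_{n→∞} E[e^{i(Z_{t_n} − Z_0)}] = E[e^{iZ_0}] · E[e^{−iZ_0}]. Then for every complex-valued Y ∈ L²(Ω, ℱ, P) and every sequence (t_n) ⊆ ℝ^l with ‖t_n‖_∞ → ∞, lim_{n→∞} E[e^{iZ_{t_n}} · conj(Y)] = E[e^{iZ_0}] · E[conj(Y)]. -/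
open MeasureTheory Filter

noncomputable section

/-- A real-valued random field is strictly stationary. -/
def IsStationaryRealField {Ω : Type*} [MeasurableSpace Ω] {l : ℕ} (P : Measure Ω)
    (Z : (Fin l → ℝ) → Ω → ℝ) : Prop :=
  ∀ (h : Fin l → ℝ) (m : ℕ) (t : Fin m → (Fin l → ℝ)),
    P.map (fun ω (j : Fin m) => Z (t j + h) ω) = P.map (fun ω (j : Fin m) => Z (t j) ω)

local notation "⟪" x ", " y "⟫" => @inner ℂ _ _ x y

lemma stat_one {Ω : Type*} [MeasurableSpace Ω] {l : ℕ} (P : Measure Ω)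
    (Z : (Fin l → ℝ) → Ω → ℝ) (hmeas : ∀ t, Measurable (Z t))
    (hstat : IsStationaryRealField P Z) (s : Fin l → ℝ) :
    ∫ ω, Complex.exp (Complex.I * ((Z s ω : ℝ) : ℂ)) ∂P
      = ∫ ω, Complex.exp (Complex.I * ((Z 0 ω : ℝ) : ℂ)) ∂P := by
  have h := hstat s 1 (fun _ => 0)
  have hg : Continuous (fun v : Fin 1 → ℝ => Complex.exp (Complex.I * (v 0 : ℂ))) :=
    Complex.continuous_exp.comp (continuous_const.mul
      (Complex.continuous_ofReal.comp (continuous_apply 0)))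
  have hm1 : Measurable (fun ω (j : Fin 1) => Z ((fun _ => (0 : Fin l → ℝ)) j + s) ω) :=
    measurable_pi_lambda _ fun j => hmeas _
  have hm2 : Measurable (fun ω (j : Fin 1) => Z ((fun _ : Fin 1 => (0 : Fin l → ℝ)) j) ω) :=
    measurable_pi_lambda _ fun j => hmeas _
  have e1 := integral_map (μ := P) hm1.aemeasurable hg.aestronglyMeasurable
  have e2 := integral_map (μ := P) hm2.aemeasurable hg.aestronglyMeasurable
  rw [h, e2] at e1
  simpa [zero_add] using e1.symm

lemma stat_two {Ω : Type*} [MeasurableSpace Ω] {l : ℕ} (P : Measure Ω)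
    (Z : (Fin l → ℝ) → Ω → ℝ) (hmeas : ∀ t, Measurable (Z t))
    (hstat : IsStationaryRealField P Z) (s r : Fin l → ℝ) :
    ∫ ω, Complex.exp (Complex.I * ((Z s ω - Z r ω : ℝ) : ℂ)) ∂P
      = ∫ ω, Complex.exp (Complex.I * ((Z (s - r) ω - Z 0 ω : ℝ) : ℂ)) ∂P := by
  have h := hstat r 2 ![s - r, 0]
  have hg : Continuous (fun v : Fin 2 → ℝ =>
      Complex.exp (Complex.I * ((v 0 - v 1 : ℝ) : ℂ))) :=
    Complex.continuous_exp.comp (continuous_const.mul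
      (Complex.continuous_ofReal.comp ((continuous_apply 0).sub (continuous_apply 1))))
  have hm1 : Measurable (fun ω (j : Fin 2) => Z ((![s - r, 0]) j + r) ω) :=
    measurable_pi_lambda _ fun j => hmeas _
  have hm2 : Measurable (fun ω (j : Fin 2) => Z ((![s - r, 0]) j) ω) :=
    measurable_pi_lambda _ fun j => hmeas _
  have e1 := integral_map (μ := P) hm1.aemeasurable hg.aestronglyMeasurable
  have e2 := integral_map (μ := P) hm2.aemeasurable hg.aestronglyMeasurable
  rw [h, e2] at e1
  simpa [Matrix.cons_val_zero, Matrix.cons_val_one, Matrix.head_cons, sub_add_cancel,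
    zero_add] using e1.symm

lemma weak_null_aux {E : Type*} [NormedAddCommGroup E] [InnerProductSpace ℂ E]
    {l : ℕ} (t : ℕ → (Fin l → ℝ)) (ht : Tendsto (fun n => ‖t n‖) atTop atTop)
    (b : ℕ → E) (y : E) (M : ℝ) (hM : ∀ n, ‖b n‖ ≤ M)
    (hsep : ∀ ε > 0, ∃ R : ℝ, ∀ n m : ℕ, R ≤ ‖t n - t m‖ → ‖⟪b n, b m⟫‖ ≤ ε) :
    Tendsto (fun n => ⟪y, b n⟫) atTop (nhds 0) := by
  by_contra hc
  rw [Metric.tendsto_atTop] at hc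
  push_neg at hc
  obtain ⟨δ, hδ, hfreq⟩ := hc
  simp only [dist_zero_right] at hfreq
  have hy : 0 < ‖y‖ := by
    obtain ⟨n, -, hn⟩ := hfreq 0
    by_contra h
    push_neg at h
    have : y = 0 := norm_eq_zero.mp (le_antisymm h (norm_nonneg y))
    rw [this] at hn
    simp at hn
    linarith
  have hM0 : 0 ≤ M := le_trans (norm_nonneg (b 0)) (hM 0)
  set ε : ℝ := δ ^ 2 / (2 * ‖y‖ ^ 2) with hεdef
  have hε : 0 < ε := by positivity
  obtain ⟨R₀, hR₀⟩ := hsep ε hε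
  set R : ℝ := max R₀ 0 with hRdef
  have hR : 0 ≤ R := le_max_right _ _
  have hsep' : ∀ n m : ℕ, R ≤ ‖t n - t m‖ → ‖⟪b n, b m⟫‖ ≤ ε := fun n m h =>
    hR₀ n m (le_trans (le_max_left _ _) h)
  have hsel : ∀ A : ℝ, ∃ n, δ ≤ ‖⟪y, b n⟫‖ ∧ A ≤ ‖t n‖ := by
    intro A
    obtain ⟨N, hN⟩ := (tendsto_atTop.mp ht A).exists_forall_of_atTop
    obtain ⟨n, hn, hn2⟩ := hfreq N
    exact ⟨n, hn2, hN n hn⟩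
  set g : ℕ → ℕ := fun k =>
    Nat.rec (hsel 0).choose (fun _ prev => (hsel (‖t prev‖ + R)).choose) k with hgdef
  have hg1 : ∀ k, δ ≤ ‖⟪y, b (g k)⟫‖ := by
    intro k
    cases k with
    | zero => exact (hsel 0).choose_spec.1
    | succ k => exact (hsel (‖t (g k)‖ + R)).choose_spec.1
  have hg2 : ∀ k, ‖t (g k)‖ + R ≤ ‖t (g (k + 1))‖ := fun k =>
    (hsel (‖t (g k)‖ + R)).choose_spec.2
  have hmono : Monotone (fun k => ‖t (g k)‖) :=
    monotone_nat_of_le_succ fun k => by linarith [hg2 k]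
  have hg3 : ∀ i j : ℕ, i < j → ‖t (g i)‖ + R ≤ ‖t (g j)‖ := by
    intro i j hij
    calc ‖t (g i)‖ + R ≤ ‖t (g (i + 1))‖ := hg2 i
    _ ≤ ‖t (g j)‖ := hmono hij
  have hsep2 : ∀ i j : ℕ, i ≠ j → ‖⟪b (g i), b (g j)⟫‖ ≤ ε := by
    intro i j hij
    rcases lt_or_gt_of_ne hij with h | h
    · have h1 := hg3 i j h
      have h2 : ‖t (g j)‖ - ‖t (g i)‖ ≤ ‖t (g j) - t (g i)‖ := norm_sub_norm_le _ _
      refine hsep' _ _ ?_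
      rw [norm_sub_rev]
      linarith
    · have h1 := hg3 j i h
      have h2 : ‖t (g i)‖ - ‖t (g j)‖ ≤ ‖t (g i) - t (g j)‖ := norm_sub_norm_le _ _
      refine hsep' _ _ ?_
      linarith
  obtain ⟨K, hK⟩ := exists_nat_gt (2 * ‖y‖ ^ 2 * M ^ 2 / δ ^ 2)
  have hKpos : 0 < (K : ℝ) := lt_of_le_of_lt (by positivity) hK
  set z : ℕ → ℂ := fun k => ⟪y, b (g k)⟫ with hzdef
  have hzne : ∀ k, z k ≠ 0 := by
    intro k h
    have := hg1 k
    have hz : ⟪y, b (g k)⟫ = (0 : ℂ) := h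
    rw [hz] at this
    simp at this
    linarith
  set θ : ℕ → ℂ := fun k => (starRingEnd ℂ) (z k) / (‖z k‖ : ℂ) with hθdef
  have hθ1 : ∀ k, ‖θ k‖ = 1 := by
    intro k
    rw [hθdef]
    simp only [norm_div, RCLike.norm_conj, Complex.norm_real, norm_norm]
    rw [div_self (norm_ne_zero_iff.mpr (hzne k))]
  have hθz : ∀ k, θ k * z k = (‖z k‖ : ℂ) := by
    intro k
    rw [hθdef]
    have h1 : (starRingEnd ℂ) (z k) * z k = ((‖z k‖ : ℂ)) ^ 2 := by
      rw [mul_comm, Complex.mul_conj]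
      norm_cast
      rw [Complex.normSq_eq_norm_sq]
    rw [div_mul_eq_mul_div, h1, sq, mul_div_assoc,
      div_self (by exact_mod_cast norm_ne_zero_iff.mpr (hzne k)), mul_one]
  set S : E := ∑ k ∈ Finset.range K, θ k • b (g k) with hSdef
  have hyS : ⟪y, S⟫ = ((∑ k ∈ Finset.range K, ‖z k‖ : ℝ) : ℂ) := by
    rw [hSdef, inner_sum]
    push_cast
    refine Finset.sum_congr rfl fun k _ => ?_
    rw [inner_smul_right]
    exact hθz k
  have h1 : (K : ℝ) * δ ≤ ‖⟪y, S⟫‖ := by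
    rw [hyS]
    rw [Complex.norm_real]
    have hge : (K : ℝ) * δ ≤ ∑ k ∈ Finset.range K, ‖z k‖ := by
      calc (K : ℝ) * δ = ∑ _k ∈ Finset.range K, δ := by
            rw [Finset.sum_const, Finset.card_range, nsmul_eq_mul]
      _ ≤ ∑ k ∈ Finset.range K, ‖z k‖ := Finset.sum_le_sum fun k _ => hg1 k
    calc (K : ℝ) * δ ≤ ∑ k ∈ Finset.range K, ‖z k‖ := hge
    _ ≤ |∑ k ∈ Finset.range K, ‖z k‖| := le_abs_self _
  have hSS : ‖S‖ ^ 2 ≤ (K : ℝ) * M ^ 2 + (K : ℝ) ^ 2 * ε := by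
    have e1 : ⟪S, S⟫ = ∑ i ∈ Finset.range K, ∑ j ∈ Finset.range K,
        (starRingEnd ℂ) (θ i) * (θ j * ⟪b (g i), b (g j)⟫) := by
      rw [hSdef, sum_inner]
      refine Finset.sum_congr rfl fun i _ => ?_
      rw [inner_sum]
      refine Finset.sum_congr rfl fun j _ => ?_
      rw [inner_smul_left, inner_smul_right]
    have e2 : ‖⟪S, S⟫‖ ≤ ∑ i ∈ Finset.range K, ∑ j ∈ Finset.range K,
        ‖⟪b (g i), b (g j)⟫‖ := by
      rw [e1]
      refine le_trans (norm_sum_le _ _) (Finset.sum_le_sum fun i _ => ?_)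
      refine le_trans (norm_sum_le _ _) (Finset.sum_le_sum fun j _ => ?_)
      rw [norm_mul, norm_mul, RCLike.norm_conj, hθ1, hθ1, one_mul, one_mul]
    have e3 : ∀ i ∈ Finset.range K, ∑ j ∈ Finset.range K, ‖⟪b (g i), b (g j)⟫‖
        ≤ M ^ 2 + (K : ℝ) * ε := by
      intro i hi
      rw [← Finset.add_sum_erase _ _ hi]
      have d1 : ‖⟪b (g i), b (g i)⟫‖ ≤ M ^ 2 := by
        calc ‖⟪b (g i), b (g i)⟫‖ ≤ ‖b (g i)‖ * ‖b (g i)‖ := norm_inner_le_norm _ _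
        _ ≤ M * M := mul_le_mul (hM _) (hM _) (norm_nonneg _) hM0
        _ = M ^ 2 := (sq M).symm
      have d2 : ∑ j ∈ (Finset.range K).erase i, ‖⟪b (g i), b (g j)⟫‖ ≤ (K : ℝ) * ε := by
        calc ∑ j ∈ (Finset.range K).erase i, ‖⟪b (g i), b (g j)⟫‖
            ≤ ((Finset.range K).erase i).card • ε :=
              Finset.sum_le_card_nsmul _ _ ε fun j hj =>
                hsep2 i j (Ne.symm (Finset.ne_of_mem_erase hj))
        _ = ((Finset.range K).erase i).card * ε := nsmul_eq_mul _ _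
        _ ≤ (K : ℝ) * ε := by
              apply mul_le_mul_of_nonneg_right _ (le_of_lt hε)
              exact_mod_cast le_trans (Finset.card_erase_le) (le_of_eq (Finset.card_range K))
      linarith
    have e4 : ‖⟪S, S⟫‖ ≤ (K : ℝ) * (M ^ 2 + (K : ℝ) * ε) := by
      calc ‖⟪S, S⟫‖ ≤ ∑ i ∈ Finset.range K, ∑ j ∈ Finset.range K, ‖⟪b (g i), b (g j)⟫‖ := e2
      _ ≤ ∑ _i ∈ Finset.range K, (M ^ 2 + (K : ℝ) * ε) := Finset.sum_le_sum e3
      _ = (K : ℝ) * (M ^ 2 + (K : ℝ) * ε) := by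
            rw [Finset.sum_const, Finset.card_range, nsmul_eq_mul]
    have e5 : ‖S‖ ^ 2 = RCLike.re ⟪S, S⟫ := (inner_self_eq_norm_sq S).symm
    have e6 : RCLike.re ⟪S, S⟫ ≤ ‖⟪S, S⟫‖ := RCLike.re_le_norm _
    nlinarith
  have h2 : ((K : ℝ) * δ) ^ 2 ≤ ‖y‖ ^ 2 * ‖S‖ ^ 2 := by
    have h5 := norm_inner_le_norm (𝕜 := ℂ) y S
    have hKδ : 0 ≤ (K : ℝ) * δ := by positivity
    have h6 : (K : ℝ) * δ ≤ ‖y‖ * ‖S‖ := le_trans h1 h5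
    calc ((K : ℝ) * δ) ^ 2 ≤ (‖y‖ * ‖S‖) ^ 2 := pow_le_pow_left₀ hKδ h6 2
    _ = ‖y‖ ^ 2 * ‖S‖ ^ 2 := mul_pow _ _ _
  have h3 : ‖y‖ ^ 2 * ε = δ ^ 2 / 2 := by
    rw [hεdef]
    field_simp
  have h4 : 2 * ‖y‖ ^ 2 * M ^ 2 < (K : ℝ) * δ ^ 2 := by
    rw [div_lt_iff₀ (by positivity)] at hK
    linarith
  nlinarith [sq_nonneg ((K : ℝ) * δ)]

lemma inner_toLp_eq {Ω : Type*} [MeasurableSpace Ω] (P : Measure Ω) (f g : Ω → ℂ)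
    (hf : MemLp f 2 P) (hg : MemLp g 2 P) :
    ⟪hf.toLp f, hg.toLp g⟫ = ∫ ω, (starRingEnd ℂ) (f ω) * g ω ∂P := by
  rw [MeasureTheory.L2.inner_def]
  refine integral_congr_ae ?_
  filter_upwards [hf.coeFn_toLp, hg.coeFn_toLp] with ω h1 h2
  rw [h1, h2, RCLike.inner_apply, mul_comm]

lemma exp_conj_mul (x y : ℝ) :
    (starRingEnd ℂ) (Complex.exp (Complex.I * (x : ℂ))) * Complex.exp (Complex.I * (y : ℂ))
      = Complex.exp (Complex.I * ((y - x : ℝ) : ℂ)) := by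
  rw [← Complex.exp_conj, ← Complex.exp_add]
  congr 1
  rw [map_mul, Complex.conj_I, Complex.conj_ofReal]
  push_cast
  ring


/-- If a strictly stationary real random field `Z` satisfies
`E[e^{i(Z_{t_n} - Z_0)}] → E[e^{iZ_0}] E[e^{-iZ_0}]` along all sequences with
`‖t_n‖_∞ → ∞`, then for every complex `Y ∈ L²(P)` one has
`E[e^{iZ_{t_n}} conj(Y)] → E[e^{iZ_0}] E[conj(Y)]` along all such sequences. -/
theorem stmt_9 {Ω : Type*} [MeasurableSpace Ω] {l : ℕ} (P : Measure Ω)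
    [IsProbabilityMeasure P] (Z : (Fin l → ℝ) → Ω → ℝ)
    (hmeas : ∀ t, Measurable (Z t))
    (hstat : IsStationaryRealField P Z)
    (hchar : ∀ t : ℕ → (Fin l → ℝ), Tendsto (fun n => ‖t n‖) atTop atTop →
      Tendsto (fun n => ∫ ω, Complex.exp (Complex.I * ((Z (t n) ω - Z 0 ω : ℝ) : ℂ)) ∂P)
        atTop (nhds ((∫ ω, Complex.exp (Complex.I * ((Z 0 ω : ℝ) : ℂ)) ∂P) *
          (∫ ω, Complex.exp (-Complex.I * ((Z 0 ω : ℝ) : ℂ)) ∂P)))) :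
    ∀ Y : Ω → ℂ, MemLp Y 2 P →
      ∀ t : ℕ → (Fin l → ℝ), Tendsto (fun n => ‖t n‖) atTop atTop →
        Tendsto (fun n =>
            ∫ ω, Complex.exp (Complex.I * ((Z (t n) ω : ℝ) : ℂ)) * (starRingEnd ℂ) (Y ω) ∂P)
          atTop (nhds ((∫ ω, Complex.exp (Complex.I * ((Z 0 ω : ℝ) : ℂ)) ∂P) *
            (∫ ω, (starRingEnd ℂ) (Y ω) ∂P))) := by
  intro Y hY t ht
  have hnorm : ∀ (s : Fin l → ℝ) ω, ‖Complex.exp (Complex.I * ((Z s ω : ℝ) : ℂ))‖ = 1 := by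
    intro s ω
    rw [mul_comm]
    exact Complex.norm_exp_ofReal_mul_I _
  have hemeas : ∀ s : Fin l → ℝ,
      Measurable (fun ω => Complex.exp (Complex.I * ((Z s ω : ℝ) : ℂ))) := fun s =>
    Complex.measurable_exp.comp (measurable_const.mul (Complex.measurable_ofReal.comp (hmeas s)))
  have hmem : ∀ s : Fin l → ℝ,
      MemLp (fun ω => Complex.exp (Complex.I * ((Z s ω : ℝ) : ℂ))) 2 P := by
    intro s
    refine MemLp.of_bound (hemeas s).aestronglyMeasurable 1 ?_
    filter_upwards with ω
    rw [hnorm]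
  set c : ℂ := ∫ ω, Complex.exp (Complex.I * ((Z 0 ω : ℝ) : ℂ)) ∂P with hcdef
  set u : ℕ → Lp ℂ 2 P := fun n => ((hmem (t n)).toLp _) with hudef
  set oneL : Lp ℂ 2 P := ((memLp_const (1 : ℂ)).toLp _) with honedef
  set yL : Lp ℂ 2 P := hY.toLp Y with hyLdef
  set b : ℕ → Lp ℂ 2 P := fun n => u n - c • oneL with hbdef
  set φ : (Fin l → ℝ) → ℂ :=
    fun s => ∫ ω, Complex.exp (Complex.I * ((Z s ω - Z 0 ω : ℝ) : ℂ)) ∂P with hφdef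
  have hconj : (∫ ω, Complex.exp (-Complex.I * ((Z 0 ω : ℝ) : ℂ)) ∂P) = (starRingEnd ℂ) c := by
    rw [hcdef, ← integral_conj]
    refine integral_congr_ae (Eventually.of_forall fun ω => ?_)
    simp only [← Complex.exp_conj, map_mul, Complex.conj_I, Complex.conj_ofReal]
  -- uniform version of hchar
  have hunif : ∀ ε > 0, ∃ R : ℝ, ∀ s : Fin l → ℝ, R ≤ ‖s‖ →
      ‖φ s - c * (starRingEnd ℂ) c‖ ≤ ε := by
    intro ε hε
    by_contra hcon
    push_neg at hcon
    choose s hs1 hs2 using hcon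
    set s' : ℕ → (Fin l → ℝ) := fun n => s (n : ℝ) with hs'def
    have hts' : Tendsto (fun n => ‖s' n‖) atTop atTop :=
      tendsto_atTop_mono (fun n => hs1 (n : ℝ)) tendsto_natCast_atTop_atTop
    have hlim : Tendsto (fun n => φ (s' n)) atTop (nhds (c * (starRingEnd ℂ) c)) := by
      have h := hchar s' hts'
      rw [hconj] at h
      exact h
    obtain ⟨N, hN⟩ := Metric.tendsto_atTop.mp hlim ε hε
    have h1 := hN N le_rfl
    rw [dist_eq_norm] at h1
    exact lt_irrefl ε ((hs2 (N : ℝ)).trans h1)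
  -- inner products
  have huu : ∀ n m, ⟪u n, u m⟫ = φ (t m - t n) := by
    intro n m
    rw [hudef]
    rw [inner_toLp_eq]
    calc (∫ ω, (starRingEnd ℂ) (Complex.exp (Complex.I * ((Z (t n) ω : ℝ) : ℂ))) *
            Complex.exp (Complex.I * ((Z (t m) ω : ℝ) : ℂ)) ∂P)
        = ∫ ω, Complex.exp (Complex.I * ((Z (t m) ω - Z (t n) ω : ℝ) : ℂ)) ∂P :=
          integral_congr_ae (Eventually.of_forall fun ω => exp_conj_mul _ _)
    _ = φ (t m - t n) := stat_two P Z hmeas hstat (t m) (t n)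
  have hu1 : ∀ n, ⟪u n, oneL⟫ = (starRingEnd ℂ) c := by
    intro n
    rw [hudef, honedef, inner_toLp_eq]
    simp only [mul_one]
    rw [integral_conj]
    rw [stat_one P Z hmeas hstat (t n)]
  have h1u : ∀ m, ⟪oneL, u m⟫ = c := by
    intro m
    rw [hudef, honedef, inner_toLp_eq]
    simp only [map_one, one_mul]
    exact stat_one P Z hmeas hstat (t m)
  have h11 : ⟪oneL, oneL⟫ = 1 := by
    rw [honedef, inner_toLp_eq]
    simp
  have hbb : ∀ n m, ⟪b n, b m⟫ = φ (t m - t n) - c * (starRingEnd ℂ) c := by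
    intro n m
    rw [hbdef]
    simp only [inner_sub_left, inner_sub_right, inner_smul_left, inner_smul_right]
    rw [huu, hu1, h1u, h11]
    ring
  have hsep : ∀ ε > 0, ∃ R : ℝ, ∀ n m : ℕ, R ≤ ‖t n - t m‖ → ‖⟪b n, b m⟫‖ ≤ ε := by
    intro ε hε
    obtain ⟨R, hR⟩ := hunif ε hε
    refine ⟨R, fun n m h => ?_⟩
    rw [hbb]
    refine hR _ ?_
    rwa [norm_sub_rev] at h
  -- norm bounds
  have hptone : ∀ (s : Fin l → ℝ) ω,
      (starRingEnd ℂ) (Complex.exp (Complex.I * ((Z s ω : ℝ) : ℂ))) *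
        Complex.exp (Complex.I * ((Z s ω : ℝ) : ℂ)) = 1 := by
    intro s ω
    rw [mul_comm, Complex.mul_conj]
    norm_cast
    rw [Complex.normSq_eq_norm_sq]
    have h := hnorm s ω
    rw [h]
    norm_num
  have hun : ∀ n, ‖u n‖ ≤ 1 := by
    intro n
    have h2 : ⟪u n, u n⟫ = 1 := by
      rw [hudef, inner_toLp_eq]
      rw [integral_congr_ae (Eventually.of_forall fun ω => hptone (t n) ω)]
      simp
    have h3 : ‖u n‖ ^ 2 = 1 := by
      have h4 := inner_self_eq_norm_sq (𝕜 := ℂ) (u n)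
      rw [h2] at h4
      simpa using h4.symm
    nlinarith [norm_nonneg (u n)]
  have hone : ‖oneL‖ ≤ 1 := by
    have h3 : ‖oneL‖ ^ 2 = 1 := by
      have h4 := inner_self_eq_norm_sq (𝕜 := ℂ) oneL
      rw [h11] at h4
      simpa using h4.symm
    nlinarith [norm_nonneg oneL]
  have hcle : ‖c‖ ≤ 1 := by
    rw [hcdef]
    calc ‖∫ ω, Complex.exp (Complex.I * ((Z 0 ω : ℝ) : ℂ)) ∂P‖
        ≤ ∫ ω, ‖Complex.exp (Complex.I * ((Z 0 ω : ℝ) : ℂ))‖ ∂P := norm_integral_le_integral_norm _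
    _ = 1 := by simp [hnorm]
  have hM : ∀ n, ‖b n‖ ≤ 2 := by
    intro n
    rw [hbdef]
    calc ‖u n - c • oneL‖ ≤ ‖u n‖ + ‖c • oneL‖ := norm_sub_le _ _
    _ ≤ 1 + ‖c‖ * ‖oneL‖ := by rw [norm_smul]; exact add_le_add (hun n) le_rfl
    _ ≤ 2 := by nlinarith [norm_nonneg c, norm_nonneg oneL]
  have hweak : Tendsto (fun n => ⟪yL, b n⟫) atTop (nhds 0) :=
    weak_null_aux t ht b yL 2 hM hsep
  -- assembly
  have hyone : ⟪yL, oneL⟫ = ∫ ω, (starRingEnd ℂ) (Y ω) ∂P := by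
    rw [hyLdef, honedef, inner_toLp_eq]
    simp
  have hyu : ∀ n, ⟪yL, u n⟫
      = ∫ ω, Complex.exp (Complex.I * ((Z (t n) ω : ℝ) : ℂ)) * (starRingEnd ℂ) (Y ω) ∂P := by
    intro n
    rw [hyLdef, hudef, inner_toLp_eq]
    exact integral_congr_ae (Eventually.of_forall fun ω => mul_comm _ _)
  have hfin : ∀ n,
      (∫ ω, Complex.exp (Complex.I * ((Z (t n) ω : ℝ) : ℂ)) * (starRingEnd ℂ) (Y ω) ∂P)
        = ⟪yL, b n⟫ + c * ⟪yL, oneL⟫ := by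
    intro n
    have h1 : ⟪yL, b n⟫ = ⟪yL, u n⟫ - c * ⟪yL, oneL⟫ := by
      rw [hbdef]
      simp only [inner_sub_right, inner_smul_right]
    rw [h1, hyu n]
    ring
  have hconv : Tendsto (fun n => ⟪yL, b n⟫ + c * ⟪yL, oneL⟫) atTop
      (nhds (0 + c * ⟪yL, oneL⟫)) := hweak.add tendsto_const_nhds
  rw [zero_add] at hconv
  have hlimeq : (∫ ω, Complex.exp (Complex.I * ((Z 0 ω : ℝ) : ℂ)) ∂P) *
      (∫ ω, (starRingEnd ℂ) (Y ω) ∂P) = c * ⟪yL, oneL⟫ := by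
    rw [hyone, hcdef]
  rw [hlimeq]
  exact Tendsto.congr (fun n => (hfin n).symm) hconv

end
end

section
/- Let (X_t)_{t∈ℝ^l} be an ℝ^d-valued strictly stationary random field. Suppose that for all j, k ∈ {1,…,d} and every sequence (t_n)_{n∈ℕ} ⊆ ℝ^l with ‖t_n‖_∞ → ∞, lim_{n→∞} E[e^{i(X_{t_n}^{(j)} − X_0^{(k)})}] = E[e^{iX_0^{(j)}}] · E[e^{−iX_0^{(k)}}]. Then for all j, k ∈ {1,…,d} and every sequence (t_n) ⊆ ℝ^l with ‖t_n‖_∞ → ∞, lim_{n→∞} E[e^{i(X_{t_n}^{(j)} + X_0^{(k)})}] = E[e^{iX_0^{(j)}}] · E[e^{iX_0^{(k)}}]. -/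
open MeasureTheory Filter ProbabilityTheory
open scoped MeasureTheory

noncomputable section

/-- The `n`-fold convolution power of a measure. -/
def convPow {E : Type*} [MeasurableSpace E] [AddMonoid E] (ν : Measure E) : ℕ → Measure E
  | 0 => Measure.dirac 0
  | n + 1 => (convPow ν n) ∗ ν

/-- A probability measure is infinitely divisible if every `n ≥ 1` admits an `n`-th
convolution root. -/
def IsInfDiv {E : Type*} [MeasurableSpace E] [AddMonoid E] (μ : Measure E) : Prop :=
  ∀ n : ℕ, 1 ≤ n → ∃ ν : Measure E, IsProbabilityMeasure ν ∧ convPow ν n = μ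

/-- A random field is strictly stationary: all finite-dimensional distributions are
invariant under a common shift of the indices. -/
def IsStationaryField {Ω : Type*} [MeasurableSpace Ω] {l d : ℕ} (P : Measure Ω)
    (X : (Fin l → ℝ) → Ω → (Fin d → ℝ)) : Prop :=
  ∀ (h : Fin l → ℝ) (m : ℕ) (t : Fin m → (Fin l → ℝ)),
    P.map (fun ω (j : Fin m) => X (t j + h) ω) = P.map (fun ω (j : Fin m) => X (t j) ω)

/-- All finite-dimensional distributions of the field are infinitely divisible. -/
def IsIDField {Ω : Type*} [MeasurableSpace Ω] {l d : ℕ} (P : Measure Ω)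
    (X : (Fin l → ℝ) → Ω → (Fin d → ℝ)) : Prop :=
  ∀ (m : ℕ) (t : Fin m → (Fin l → ℝ)),
    IsInfDiv (P.map (fun ω (j : Fin m) => X (t j) ω))

/-- The random field is mixing (characteristic-function formulation); the norm on
`Fin l → ℝ` is the sup norm. -/
def IsMixingField {Ω : Type*} [MeasurableSpace Ω] {l d : ℕ} (P : Measure Ω)
    (X : (Fin l → ℝ) → Ω → (Fin d → ℝ)) : Prop :=
  ∀ (m : ℕ) (s p : Fin m → (Fin l → ℝ)) (θ₁ θ₂ : Fin m → Fin d → ℝ)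
    (t : ℕ → (Fin l → ℝ)), Tendsto (fun n => ‖t n‖) atTop atTop →
    Tendsto (fun n => ∫ ω, Complex.exp (Complex.I *
        (((∑ j, ∑ k, θ₁ j k * X (s j) ω k) + ∑ j, ∑ k, θ₂ j k * X (p j + t n) ω k : ℝ) : ℂ)) ∂P)
      atTop (nhds
        ((∫ ω, Complex.exp (Complex.I * ((∑ j, ∑ k, θ₁ j k * X (s j) ω k : ℝ) : ℂ)) ∂P) *
         (∫ ω, Complex.exp (Complex.I * ((∑ j, ∑ k, θ₂ j k * X (p j) ω k : ℝ) : ℂ)) ∂P)))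

/-- A subset of `ℝ^l` has density one w.r.t. Lebesgue measure. -/
def HasDensityOne {l : ℕ} (D : Set (Fin l → ℝ)) : Prop :=
  Tendsto (fun T : ℝ => ((2 * T) ^ l)⁻¹ *
      ∫ x in Set.univ.pi (fun _ : Fin l => Set.Ioc (-T) T),
        Set.indicator Dᶜ (fun _ => (1 : ℝ)) x)
    atTop (nhds 0)

/-- The random field is weakly mixing (characteristic-function formulation along a
density-one set). -/
def IsWeaklyMixingField {Ω : Type*} [MeasurableSpace Ω] {l d : ℕ} (P : Measure Ω)
    (X : (Fin l → ℝ) → Ω → (Fin d → ℝ)) : Prop :=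
  ∃ D : Set (Fin l → ℝ), HasDensityOne D ∧
    ∀ (m : ℕ) (s p : Fin m → (Fin l → ℝ)) (θ₁ θ₂ : Fin m → Fin d → ℝ)
      (t : ℕ → (Fin l → ℝ)), (∀ n, t n ∈ D) → Tendsto (fun n => ‖t n‖) atTop atTop →
      Tendsto (fun n => ∫ ω, Complex.exp (Complex.I *
          (((∑ j, ∑ k, θ₁ j k * X (s j) ω k) + ∑ j, ∑ k, θ₂ j k * X (p j + t n) ω k : ℝ) : ℂ)) ∂P)
        atTop (nhds
          ((∫ ω, Complex.exp (Complex.I * ((∑ j, ∑ k, θ₁ j k * X (s j) ω k : ℝ) : ℂ)) ∂P) *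
           (∫ ω, Complex.exp (Complex.I * ((∑ j, ∑ k, θ₂ j k * X (p j) ω k : ℝ) : ℂ)) ∂P)))

namespace Stmt10Aux

def eC (x : ℝ) : ℂ := Complex.exp (Complex.I * x)

lemma norm_eC (x : ℝ) : ‖eC x‖ = 1 := by
  simp [eC, Complex.norm_exp]

lemma eC_add (x y : ℝ) : eC (x + y) = eC x * eC y := by
  rw [eC, eC, eC, ← Complex.exp_add]; congr 1; push_cast; ring

lemma conj_eC (x : ℝ) : (starRingEnd ℂ) (eC x) = eC (-x) := by
  rw [eC, eC, ← Complex.exp_conj]; congr 1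
  simp [map_mul, Complex.conj_I, Complex.conj_ofReal]
lemma eC_mul_conj (x y : ℝ) : eC x * (starRingEnd ℂ) (eC y) = eC (x - y) := by
  rw [conj_eC, ← eC_add, sub_eq_add_neg]

lemma measurable_eC : Measurable eC :=
  (Complex.continuous_exp.comp (continuous_const.mul Complex.continuous_ofReal)).measurable


section
variable {Ω : Type*} [MeasurableSpace Ω] {l d : ℕ} (P : Measure Ω) [IsProbabilityMeasure P]
  (X : (Fin l → ℝ) → Ω → (Fin d → ℝ))

lemma integrable_of_bdd {α : Type*} [MeasurableSpace α] (μ : Measure α) [IsFiniteMeasure μ]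
    {E : Type*} [NormedAddCommGroup E] {f : α → E} (hf : AEStronglyMeasurable f μ) (C : ℝ)
    (hC : ∀ a, ‖f a‖ ≤ C) : Integrable f μ :=
  (integrable_const C).mono' hf (Filter.Eventually.of_forall hC)

lemma map_eq_integral {α : Type*} [MeasurableSpace α] {F G : Ω → α}
    (hF : Measurable F) (hG : Measurable G) (hmap : P.map F = P.map G)
    (g : α → ℂ) (hg : Measurable g) : ∫ ω, g (F ω) ∂P = ∫ ω, g (G ω) ∂P := by
  rw [← integral_map hF.aemeasurable hg.aestronglyMeasurable, hmap,
      integral_map hG.aemeasurable hg.aestronglyMeasurable]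

variable (hmeas : ∀ t, Measurable (X t)) (hstat : IsStationaryField P X)

include hmeas hstat in
lemma one_point (u : Fin l → ℝ) (g : (Fin d → ℝ) → ℂ) (hg : Measurable g) :
    ∫ ω, g (X u ω) ∂P = ∫ ω, g (X 0 ω) ∂P := by
  have h := hstat u 1 (fun _ => 0)
  simp only [zero_add] at h
  exact map_eq_integral P (F := fun ω (_ : Fin 1) => X u ω) (G := fun ω (_ : Fin 1) => X 0 ω)
    (measurable_pi_lambda _ fun _ => hmeas u) (measurable_pi_lambda _ fun _ => hmeas 0)
    h (fun w => g (w 0)) (hg.comp (measurable_pi_apply 0))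

include hmeas hstat in
lemma two_point (u v : Fin l → ℝ) (g : (Fin 2 → Fin d → ℝ) → ℂ) (hg : Measurable g) :
    ∫ ω, g (fun i => X (![u, v] i) ω) ∂P = ∫ ω, g (fun i => X (![u - v, 0] i) ω) ∂P := by
  have h := hstat (-v) 2 ![u, v]
  have key : (fun ω (i : Fin 2) => X (![u, v] i + -v) ω)
      = fun ω (i : Fin 2) => X (![u - v, 0] i) ω := by
    funext ω i
    fin_cases i <;> simp [sub_eq_add_neg]
  rw [key] at h
  exact map_eq_integral P
    (measurable_pi_lambda _ fun i => hmeas _) (measurable_pi_lambda _ fun i => hmeas _)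
    h.symm g hg

end


lemma unif {l : ℕ} {F : (Fin l → ℝ) → ℂ} {L : ℂ}
    (h : ∀ t : ℕ → (Fin l → ℝ), Tendsto (fun n => ‖t n‖) atTop atTop →
      Tendsto (fun n => F (t n)) atTop (nhds L)) :
    ∀ ε > 0, ∃ R : ℝ, ∀ u, R ≤ ‖u‖ → ‖F u - L‖ ≤ ε := by
  intro ε hε
  by_contra hc
  push_neg at hc
  choose u hu1 hu2 using hc
  have hnorm : Tendsto (fun n : ℕ => ‖u n‖) atTop atTop :=
    tendsto_atTop_mono (fun n => hu1 n) tendsto_natCast_atTop_atTop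
  have := (Metric.tendsto_atTop.mp (h (fun n => u n) hnorm)) ε hε
  obtain ⟨N, hN⟩ := this
  have h1 := hN N le_rfl
  rw [dist_eq_norm] at h1
  exact absurd h1 (not_lt.mpr (hu2 N).le)

lemma sq_integral_le {Ω : Type*} [MeasurableSpace Ω] (P : Measure Ω) [IsProbabilityMeasure P]
    {f : Ω → ℝ} (hm : Measurable f) (C : ℝ) (hb : ∀ ω, ‖f ω‖ ≤ C) :
    (∫ ω, f ω ∂P) ^ 2 ≤ ∫ ω, f ω ^ 2 ∂P := by
  have h1 : Integrable f P := integrable_of_bdd P hm.aestronglyMeasurable C hb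
  have h2 : Integrable (fun ω => f ω ^ 2) P := by
    refine integrable_of_bdd P ((hm.pow_const 2).aestronglyMeasurable) (C ^ 2) fun ω => ?_
    have h3 := hb ω
    have h0 : (0:ℝ) ≤ C := le_trans (norm_nonneg _) h3
    rw [Real.norm_eq_abs] at h3 ⊢
    rw [abs_pow]
    nlinarith [abs_nonneg (f ω)]
  have key : 0 ≤ ∫ ω, (f ω - (∫ ω', f ω' ∂P)) ^ 2 ∂P := integral_nonneg fun ω => sq_nonneg _
  have expand : ∫ ω, (f ω - (∫ ω', f ω' ∂P)) ^ 2 ∂P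
      = (∫ ω, f ω ^ 2 ∂P) - (∫ ω', f ω' ∂P) ^ 2 := by
    have heq : (fun ω => (f ω - (∫ ω', f ω' ∂P)) ^ 2)
        = fun ω => f ω ^ 2 - (2 * (∫ ω', f ω' ∂P)) * f ω + (∫ ω', f ω' ∂P) ^ 2 := by
      funext ω; ring
    have hB : Integrable (fun ω => (2 * ∫ ω', f ω' ∂P) * f ω) P := h1.const_mul _
    have hA : Integrable (fun ω => f ω ^ 2 - (2 * ∫ ω', f ω' ∂P) * f ω) P := h2.sub hB
    rw [heq, integral_add hA (integrable_const _), integral_sub h2 hB,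
      integral_const_mul, integral_const]
    simp
    ring
  linarith [expand ▸ key]



lemma vdc_bound {Ω : Type*} [MeasurableSpace Ω] (P : Measure Ω) [IsProbabilityMeasure P]
    (N : ℕ) (δ : ℝ) (hδ : 0 ≤ δ) (Y : ℕ → Ω → ℂ) (W : Ω → ℂ)
    (hYm : ∀ m, Measurable (Y m)) (hWm : Measurable W)
    (hYb : ∀ m ω, ‖Y m ω‖ ≤ 2) (hWb : ∀ ω, ‖W ω‖ ≤ 2)
    (hr : ∀ m m' : ℕ, m ∈ Finset.range N → m' ∈ Finset.range N → m ≠ m' →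
      ‖∫ ω, Y m ω * (starRingEnd ℂ) (Y m' ω) ∂P‖ ≤ δ) :
    (∑ m ∈ Finset.range N, ‖∫ ω, Y m ω * W ω ∂P‖) ^ 2 ≤ 4 * (4 * N + N ^ 2 * δ) := by
  classical
  set q : ℕ → ℂ := fun m => ∫ ω, Y m ω * W ω ∂P with hq
  set lam : ℕ → ℂ := fun m =>
    if q m = 0 then 1 else (starRingEnd ℂ) (q m) / (‖q m‖ : ℝ) with hlam
  have hlam1 : ∀ m, ‖lam m‖ ≤ 1 := by
    intro m
    rw [hlam]
    by_cases h : q m = 0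
    · simp [h]
    · simp only [h, if_false]
      rw [norm_div, RCLike.norm_conj]
      rw [Complex.norm_real, Real.norm_eq_abs, abs_of_nonneg (norm_nonneg _)]
      rw [div_self (norm_ne_zero_iff.mpr h)]
  have hlamq : ∀ m, lam m * q m = (‖q m‖ : ℝ) := by
    intro m
    rw [hlam]
    by_cases h : q m = 0
    · simp [h]
    · simp only [h, if_false]
      rw [div_mul_eq_mul_div, mul_comm ((starRingEnd ℂ) (q m)), Complex.mul_conj]
      rw [Complex.normSq_eq_norm_sq]
      rw [div_eq_iff (by exact_mod_cast norm_ne_zero_iff.mpr h)]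
      push_cast
      ring
  set S : Ω → ℂ := fun ω => ∑ m ∈ Finset.range N, lam m * Y m ω with hS
  have hSm : Measurable S := by
    rw [hS]; exact Finset.measurable_sum _ fun m _ => (hYm m).const_mul _
  have hSb : ∀ ω, ‖S ω‖ ≤ 2 * N := by
    intro ω
    rw [hS]
    calc ‖∑ m ∈ Finset.range N, lam m * Y m ω‖
        ≤ ∑ m ∈ Finset.range N, ‖lam m * Y m ω‖ := norm_sum_le _ _
      _ ≤ ∑ m ∈ Finset.range N, 2 := by
          refine Finset.sum_le_sum fun m _ => ?_
          rw [norm_mul]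
          calc ‖lam m‖ * ‖Y m ω‖ ≤ 1 * 2 :=
                mul_le_mul (hlam1 m) (hYb m ω) (norm_nonneg _) zero_le_one
            _ = 2 := one_mul 2
      _ = 2 * N := by simp [mul_comm]
  -- integrability helpers
  have hintYW : ∀ m, Integrable (fun ω => Y m ω * W ω) P := by
    intro m
    refine integrable_of_bdd P ((hYm m).mul hWm).aestronglyMeasurable 4 fun ω => ?_
    rw [norm_mul]
    calc ‖Y m ω‖ * ‖W ω‖ ≤ 2 * 2 :=
          mul_le_mul (hYb m ω) (hWb ω) (norm_nonneg _) (by norm_num)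
      _ = 4 := by norm_num
  -- step (d): lower identity
  have hT : ∫ ω, S ω * W ω ∂P = ((∑ m ∈ Finset.range N, ‖q m‖ : ℝ) : ℂ) := by
    have e1 : (fun ω => S ω * W ω)
        = fun ω => ∑ m ∈ Finset.range N, lam m * (Y m ω * W ω) := by
      funext ω
      rw [hS, Finset.sum_mul]
      exact Finset.sum_congr rfl fun m _ => mul_assoc _ _ _
    rw [e1, integral_finset_sum _ fun m _ => (hintYW m).const_mul _]
    push_cast
    refine Finset.sum_congr rfl fun m _ => ?_
    rw [integral_const_mul]
    exact hlamq m
  have hTnorm : ∑ m ∈ Finset.range N, ‖q m‖ ≤ 2 * ∫ ω, ‖S ω‖ ∂P := by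
    have h1 : ‖∫ ω, S ω * W ω ∂P‖ = ∑ m ∈ Finset.range N, ‖q m‖ := by
      rw [hT, Complex.norm_real, Real.norm_eq_abs,
        abs_of_nonneg (Finset.sum_nonneg fun m _ => norm_nonneg _)]
    have h2 : ‖∫ ω, S ω * W ω ∂P‖ ≤ ∫ ω, ‖S ω * W ω‖ ∂P :=
      norm_integral_le_integral_norm _
    have h3 : ∫ ω, ‖S ω * W ω‖ ∂P ≤ ∫ ω, 2 * ‖S ω‖ ∂P := by
      refine integral_mono ?_ ?_ fun ω => ?_
      · refine integrable_of_bdd P ?_ (4 * (2 * N)) fun ω => ?_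
        · exact ((hSm.mul hWm).norm).aestronglyMeasurable
        · rw [Real.norm_eq_abs, abs_of_nonneg (norm_nonneg _), norm_mul]
          calc ‖S ω‖ * ‖W ω‖ ≤ (2 * N) * 2 := by
                refine mul_le_mul (hSb ω) (hWb ω) (norm_nonneg _) ?_
                positivity
            _ ≤ 4 * (2 * N) := by push_cast; nlinarith [Nat.cast_nonneg (α := ℝ) N]
      · exact (integrable_of_bdd P (hSm.norm).aestronglyMeasurable (2 * N) fun ω => by
          rw [Real.norm_eq_abs, abs_of_nonneg (norm_nonneg _)]; exact hSb ω).const_mul 2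
      · rw [norm_mul, mul_comm (‖S ω‖)]
        exact mul_le_mul_of_nonneg_right (hWb ω) (norm_nonneg _)
    have h4 : ∫ ω, 2 * ‖S ω‖ ∂P = 2 * ∫ ω, ‖S ω‖ ∂P := integral_const_mul 2 _
    linarith [h1 ▸ h2]
  -- step (e)
  have hCS : (∫ ω, ‖S ω‖ ∂P) ^ 2 ≤ ∫ ω, ‖S ω‖ ^ 2 ∂P := by
    refine sq_integral_le P hSm.norm (2 * N) fun ω => ?_
    rw [Real.norm_eq_abs, abs_of_nonneg (norm_nonneg _)]
    exact hSb ω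
  -- step (f)
  have hV : ∫ ω, ‖S ω‖ ^ 2 ∂P ≤ 4 * N + N ^ 2 * δ := by
    have hint : ∀ m m' : ℕ, Integrable (fun ω => Y m ω * (starRingEnd ℂ) (Y m' ω)) P := by
      intro m m'
      refine integrable_of_bdd P ((hYm m).mul (Complex.continuous_conj.measurable.comp
        (hYm m'))).aestronglyMeasurable 4 fun ω => ?_
      rw [norm_mul, RCLike.norm_conj]
      calc ‖Y m ω‖ * ‖Y m' ω‖ ≤ 2 * 2 :=
            mul_le_mul (hYb m ω) (hYb m' ω) (norm_nonneg _) (by norm_num)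
        _ = 4 := by norm_num
    have hSS : ((∫ ω, ‖S ω‖ ^ 2 ∂P : ℝ) : ℂ) = ∑ m ∈ Finset.range N, ∑ m' ∈ Finset.range N,
        (lam m * (starRingEnd ℂ) (lam m')) * ∫ ω, Y m ω * (starRingEnd ℂ) (Y m' ω) ∂P := by
      rw [show ((∫ ω, ‖S ω‖ ^ 2 ∂P : ℝ) : ℂ) = ∫ ω, ((‖S ω‖ ^ 2 : ℝ) : ℂ) ∂P from integral_ofReal.symm]
      have e2 : (fun ω => ((‖S ω‖ ^ 2 : ℝ) : ℂ))
          = fun ω => ∑ m ∈ Finset.range N, ∑ m' ∈ Finset.range N,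
            (lam m * (starRingEnd ℂ) (lam m')) * (Y m ω * (starRingEnd ℂ) (Y m' ω)) := by
        funext ω
        have : ((‖S ω‖ ^ 2 : ℝ) : ℂ) = S ω * (starRingEnd ℂ) (S ω) := by
          rw [Complex.mul_conj, Complex.normSq_eq_norm_sq]
        rw [this, hS, map_sum, Finset.sum_mul_sum]
        refine Finset.sum_congr rfl fun m _ => Finset.sum_congr rfl fun m' _ => ?_
        rw [map_mul]
        ring
      rw [e2, integral_finset_sum _ fun m _ => ?_]
      · refine Finset.sum_congr rfl fun m _ => ?_
        rw [integral_finset_sum _ fun m' _ => ((hint m m').const_mul _)]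
        exact Finset.sum_congr rfl fun m' _ => integral_const_mul _ _
      · exact integrable_finset_sum _ fun m' _ => ((hint m m').const_mul _)
    have hnn : 0 ≤ ∫ ω, ‖S ω‖ ^ 2 ∂P := integral_nonneg fun ω => sq_nonneg _
    have : ∫ ω, ‖S ω‖ ^ 2 ∂P = ‖((∫ ω, ‖S ω‖ ^ 2 ∂P : ℝ) : ℂ)‖ := by
      rw [Complex.norm_real, Real.norm_eq_abs, abs_of_nonneg hnn]
    rw [this, hSS]
    calc ‖∑ m ∈ Finset.range N, ∑ m' ∈ Finset.range N, (lam m * (starRingEnd ℂ) (lam m')) *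
          ∫ ω, Y m ω * (starRingEnd ℂ) (Y m' ω) ∂P‖
        ≤ ∑ m ∈ Finset.range N, ‖∑ m' ∈ Finset.range N, (lam m * (starRingEnd ℂ) (lam m')) *
          ∫ ω, Y m ω * (starRingEnd ℂ) (Y m' ω) ∂P‖ := norm_sum_le _ _
      _ ≤ ∑ m ∈ Finset.range N, (4 + N * δ) := by
          refine Finset.sum_le_sum fun m hm => ?_
          calc ‖∑ m' ∈ Finset.range N, (lam m * (starRingEnd ℂ) (lam m')) *
                ∫ ω, Y m ω * (starRingEnd ℂ) (Y m' ω) ∂P‖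
              ≤ ∑ m' ∈ Finset.range N, ‖(lam m * (starRingEnd ℂ) (lam m')) *
                ∫ ω, Y m ω * (starRingEnd ℂ) (Y m' ω) ∂P‖ := norm_sum_le _ _
            _ ≤ ∑ m' ∈ Finset.range N, ((if m' = m then (4:ℝ) else 0) + δ) := by
                refine Finset.sum_le_sum fun m' hm' => ?_
                have hb : ‖(lam m * (starRingEnd ℂ) (lam m')) *
                    ∫ ω, Y m ω * (starRingEnd ℂ) (Y m' ω) ∂P‖
                    ≤ ‖∫ ω, Y m ω * (starRingEnd ℂ) (Y m' ω) ∂P‖ := by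
                  rw [norm_mul, norm_mul, RCLike.norm_conj]
                  have h1 : ‖lam m‖ * ‖lam m'‖ ≤ 1 :=
                    mul_le_one₀ (hlam1 m) (norm_nonneg _) (hlam1 m')
                  exact mul_le_of_le_one_left (norm_nonneg _) h1
                by_cases h : m' = m
                · subst h
                  simp only [if_pos rfl]
                  refine le_trans hb (le_trans ?_ (by linarith : (4:ℝ) ≤ 4 + δ))
                  refine le_trans (norm_integral_le_integral_norm _) ?_
                  have : ∀ ω, ‖Y m' ω * (starRingEnd ℂ) (Y m' ω)‖ ≤ 4 := by
                    intro ω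
                    rw [norm_mul, RCLike.norm_conj]
                    nlinarith [hYb m' ω, norm_nonneg (Y m' ω)]
                  calc ∫ ω, ‖Y m' ω * (starRingEnd ℂ) (Y m' ω)‖ ∂P
                      ≤ ∫ (_ : Ω), (4:ℝ) ∂P := by
                        refine integral_mono ?_ (integrable_const _) this
                        exact (hint m' m').norm
                    _ = 4 := by simp
                · simp only [if_neg h]
                  rw [zero_add]
                  exact le_trans hb (hr m m' hm hm' (fun hc => h hc.symm))
            _ = 4 + N * δ := by
                rw [Finset.sum_add_distrib, Finset.sum_ite_eq' (Finset.range N) m fun _ => (4:ℝ)]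
                simp [hm, Finset.card_range, mul_comm]
      _ = N * (4 + N * δ) := by
          simp [Finset.sum_const, Finset.card_range, nsmul_eq_mul]
          ring
      _ ≤ 4 * N + N ^ 2 * δ := by push_cast; nlinarith [Nat.cast_nonneg (α := ℝ) N]
  -- combine
  have hnn1 : 0 ≤ ∫ ω, ‖S ω‖ ∂P := integral_nonneg fun ω => norm_nonneg _
  have hnn2 : 0 ≤ ∑ m ∈ Finset.range N, ‖q m‖ := Finset.sum_nonneg fun m _ => norm_nonneg _
  nlinarith [hTnorm, hCS, hV, hnn1, hnn2]



lemma main_key {Ω : Type*} [MeasurableSpace Ω] {l d : ℕ} (P : Measure Ω)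
    [IsProbabilityMeasure P] (X : (Fin l → ℝ) → Ω → (Fin d → ℝ))
    (hmeas : ∀ t, Measurable (X t)) (hstat : IsStationaryField P X) (j k : Fin d)
    (hA : ∀ ε > 0, ∃ R : ℝ, ∀ u : Fin l → ℝ, R ≤ ‖u‖ →
      ‖(∫ ω, eC (X u ω j - X 0 ω j) ∂P) -
        (∫ ω, eC (X 0 ω j) ∂P) * (starRingEnd ℂ) (∫ ω, eC (X 0 ω j) ∂P)‖ ≤ ε) :
    ∀ ε > 0, ∃ R : ℝ, ∀ u : Fin l → ℝ, R ≤ ‖u‖ →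
      ‖(∫ ω, eC (X u ω j + X 0 ω k) ∂P) -
        (∫ ω, eC (X 0 ω j) ∂P) * (∫ ω, eC (X 0 ω k) ∂P)‖ ≤ ε := by
  intro ε hε
  by_contra hc
  push_neg at hc
  have measE : ∀ (u : Fin l → ℝ) (a : Fin d), Measurable fun ω => eC (X u ω a) :=
    fun u a => measurable_eC.comp ((measurable_pi_apply a).comp (hmeas u))
  set φj := ∫ ω, eC (X 0 ω j) ∂P with hφj
  set φk := ∫ ω, eC (X 0 ω k) ∂P with hφk
  have honej : ∀ u : Fin l → ℝ, ∫ ω, eC (X u ω j) ∂P = φj := fun u =>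
    one_point P X hmeas hstat u (fun p => eC (p j))
      (measurable_eC.comp (measurable_pi_apply j))
  have htwo : ∀ u v : Fin l → ℝ, ∫ ω, eC (X u ω j - X v ω j) ∂P
      = ∫ ω, eC (X (u - v) ω j - X 0 ω j) ∂P := by
    intro u v
    have h2 := two_point P X hmeas hstat u v (fun w => eC (w 0 j - w 1 j))
      (measurable_eC.comp (by fun_prop))
    simpa using h2
  have intE : ∀ (u : Fin l → ℝ) (a : Fin d), Integrable (fun ω => eC (X u ω a)) P :=
    fun u a => integrable_of_bdd P (measE u a).aestronglyMeasurable 1 fun ω => (norm_eC _).le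
  have intSum : ∀ u : Fin l → ℝ, Integrable (fun ω => eC (X u ω j + X 0 ω k)) P := fun u =>
    integrable_of_bdd P (measurable_eC.comp (((measurable_pi_apply j).comp (hmeas u)).add
      ((measurable_pi_apply k).comp (hmeas 0)))).aestronglyMeasurable 1 fun ω => (norm_eC _).le
  have intDiff : ∀ u v : Fin l → ℝ, Integrable (fun ω => eC (X u ω j - X v ω j)) P :=
    fun u v => integrable_of_bdd P (measurable_eC.comp (((measurable_pi_apply j).comp
      (hmeas u)).sub ((measurable_pi_apply j).comp (hmeas v)))).aestronglyMeasurable 1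
      fun ω => (norm_eC _).le
  have hYW : ∀ u : Fin l → ℝ, ∫ ω, (eC (X u ω j) - φj) * (eC (X 0 ω k) - φk) ∂P
      = (∫ ω, eC (X u ω j + X 0 ω k) ∂P) - φj * φk := by
    intro u
    have e1 : (fun ω => (eC (X u ω j) - φj) * (eC (X 0 ω k) - φk))
        = fun ω => eC (X u ω j + X 0 ω k) - φk * eC (X u ω j)
          - (φj * eC (X 0 ω k) - φj * φk) := by
      funext ω; rw [eC_add]; ring
    have i1 : Integrable (fun ω => φk * eC (X u ω j)) P := (intE u j).const_mul φk
    have i2 : Integrable (fun ω => eC (X u ω j + X 0 ω k) - φk * eC (X u ω j)) P :=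
      (intSum u).sub i1
    have i3 : Integrable (fun ω => φj * eC (X 0 ω k)) P := (intE 0 k).const_mul φj
    have i4 : Integrable (fun ω => φj * eC (X 0 ω k) - φj * φk) P := i3.sub (integrable_const _)
    rw [e1, integral_sub i2 i4, integral_sub (intSum u) i1,
      integral_sub i3 (integrable_const _),
      integral_const_mul, integral_const_mul, integral_const, honej u, ← hφk]
    simp [measure_univ]
    ring
  have hYY : ∀ u v : Fin l → ℝ,
      ∫ ω, (eC (X u ω j) - φj) * (starRingEnd ℂ) (eC (X v ω j) - φj) ∂P
      = (∫ ω, eC (X (u - v) ω j - X 0 ω j) ∂P) - φj * (starRingEnd ℂ) φj := by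
    intro u v
    have e1 : (fun ω => (eC (X u ω j) - φj) * (starRingEnd ℂ) (eC (X v ω j) - φj))
        = fun ω => eC (X u ω j - X v ω j) - (starRingEnd ℂ) φj * eC (X u ω j)
          - (φj * (starRingEnd ℂ) (eC (X v ω j)) - φj * (starRingEnd ℂ) φj) := by
      funext ω; rw [map_sub, ← eC_mul_conj]; ring
    have mconj : Measurable fun ω => (starRingEnd ℂ) (eC (X v ω j)) :=
      Complex.continuous_conj.measurable.comp (measE v j)
    have intconj : Integrable (fun ω => φj * (starRingEnd ℂ) (eC (X v ω j))) P := by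
      refine (integrable_of_bdd P mconj.aestronglyMeasurable 1 fun ω => ?_).const_mul φj
      rw [RCLike.norm_conj]; exact (norm_eC _).le
    have i1 : Integrable (fun ω => (starRingEnd ℂ) φj * eC (X u ω j)) P :=
      (intE u j).const_mul _
    have i2 : Integrable
        (fun ω => eC (X u ω j - X v ω j) - (starRingEnd ℂ) φj * eC (X u ω j)) P :=
      (intDiff u v).sub i1
    have i4 : Integrable
        (fun ω => φj * (starRingEnd ℂ) (eC (X v ω j)) - φj * (starRingEnd ℂ) φj) P :=
      intconj.sub (integrable_const _)
    rw [e1, integral_sub i2 i4, integral_sub (intDiff u v) i1,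
      integral_sub intconj (integrable_const _),
      integral_const_mul, integral_const_mul, integral_const, honej u,
      integral_conj, honej v, htwo u v]
    simp [measure_univ]
    ring
  have hφjn : ‖φj‖ ≤ 1 := by
    rw [hφj]
    calc ‖∫ ω, eC (X 0 ω j) ∂P‖ ≤ ∫ ω, ‖eC (X 0 ω j)‖ ∂P := norm_integral_le_integral_norm _
      _ = 1 := by simp only [norm_eC]; simp
  have hφkn : ‖φk‖ ≤ 1 := by
    rw [hφk]
    calc ‖∫ ω, eC (X 0 ω k) ∂P‖ ≤ ∫ ω, ‖eC (X 0 ω k)‖ ∂P := norm_integral_le_integral_norm _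
      _ = 1 := by simp only [norm_eC]; simp
  have hYbound : ∀ (u : Fin l → ℝ) (ω : Ω), ‖eC (X u ω j) - φj‖ ≤ 2 := fun u ω => by
    calc ‖eC (X u ω j) - φj‖ ≤ ‖eC (X u ω j)‖ + ‖φj‖ := norm_sub_le _ _
      _ ≤ 2 := by rw [norm_eC]; linarith
  have hWbound : ∀ ω : Ω, ‖eC (X 0 ω k) - φk‖ ≤ 2 := fun ω => by
    calc ‖eC (X 0 ω k) - φk‖ ≤ ‖eC (X 0 ω k)‖ + ‖φk‖ := norm_sub_le _ _
      _ ≤ 2 := by rw [norm_eC]; linarith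
  -- choose N
  obtain ⟨Nn, hNn⟩ := exists_nat_gt (24 / ε ^ 2)
  set N := Nn + 1 with hNdef
  have hNpos : 0 < (N : ℝ) := by positivity
  have hNR : 24 / ε ^ 2 < (N : ℝ) := lt_of_lt_of_le hNn (by exact_mod_cast Nat.le_succ Nn)
  have hδpos : (0:ℝ) ≤ 2 / N := by positivity
  obtain ⟨R₁, hR₁⟩ := hA (2 / N) (by positivity)
  set R₀ := max R₁ 0 with hR0def
  have hR₀nonneg : (0:ℝ) ≤ R₀ := le_max_right _ _
  have hR₀ : ∀ w : Fin l → ℝ, R₀ ≤ ‖w‖ →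
      ‖(∫ ω, eC (X w ω j - X 0 ω j) ∂P) - φj * (starRingEnd ℂ) φj‖ ≤ 2 / N :=
    fun w hw => hR₁ w (le_trans (le_max_left _ _) hw)
  -- build separated sequence
  choose u hu1 hu2 using hc
  obtain ⟨s, hs0, hsS⟩ : ∃ s : ℕ → (Fin l → ℝ), s 0 = u R₀ ∧
      ∀ m, s (m + 1) = u (R₀ + ‖s m‖) :=
    ⟨fun m => Nat.rec (u R₀) (fun _ prev => u (R₀ + ‖prev‖)) m, rfl, fun m => rfl⟩
  have hqs : ∀ m : ℕ, ε < ‖(∫ ω, eC (X (s m) ω j + X 0 ω k) ∂P) - φj * φk‖ := by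
    intro m
    cases m with
    | zero => rw [hs0]; exact hu2 R₀
    | succ m => rw [hsS]; exact hu2 _
  have hgrow : ∀ m, R₀ + ‖s m‖ ≤ ‖s (m + 1)‖ := by intro m; rw [hsS]; exact hu1 _
  have hmono : Monotone fun m => ‖s m‖ := monotone_nat_of_le_succ fun m =>
    le_trans (le_add_of_nonneg_left hR₀nonneg) (hgrow m)
  have hfar : ∀ m m' : ℕ, m' < m → R₀ + ‖s m'‖ ≤ ‖s m‖ := by
    intro m
    induction m with
    | zero => intro m' h; exact absurd h (Nat.not_lt_zero m')
    | succ m ih =>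
      intro m' h
      rcases Nat.lt_succ_iff_lt_or_eq.mp h with h | h
      · exact le_trans (ih m' h) (hmono (Nat.le_succ m))
      · subst h; exact hgrow m'
  have hsep : ∀ m m' : ℕ, m ≠ m' → R₀ ≤ ‖s m - s m'‖ := by
    intro m m' hne
    rcases lt_or_gt_of_ne hne with h | h
    · rw [norm_sub_rev]
      have h1 := hfar m' m h
      have h2 := norm_sub_norm_le (s m') (s m)
      linarith
    · have h1 := hfar m m' h
      have h2 := norm_sub_norm_le (s m) (s m')
      linarith
  -- apply the van der Corput bound
  have key := vdc_bound P N (2 / N) hδpos (fun m ω => eC (X (s m) ω j) - φj)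
    (fun ω => eC (X 0 ω k) - φk)
    (fun m => (measE (s m) j).sub measurable_const)
    ((measE 0 k).sub measurable_const)
    (fun m ω => hYbound (s m) ω) hWbound
    (by
      intro m m' _ _ hne
      rw [hYY (s m) (s m')]
      exact hR₀ _ (hsep m m' hne))
  have hlow : (N : ℝ) * ε ≤ ∑ m ∈ Finset.range N,
      ‖∫ ω, (eC (X (s m) ω j) - φj) * (eC (X 0 ω k) - φk) ∂P‖ := by
    have hterm : ∀ m ∈ Finset.range N, ε ≤
        ‖∫ ω, (eC (X (s m) ω j) - φj) * (eC (X 0 ω k) - φk) ∂P‖ := by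
      intro m _
      rw [hYW (s m)]
      exact (hqs m).le
    calc (N : ℝ) * ε = ∑ _m ∈ Finset.range N, ε := by
          rw [Finset.sum_const, Finset.card_range, nsmul_eq_mul]
      _ ≤ _ := Finset.sum_le_sum hterm
  have hsq : ((N : ℝ) * ε) ^ 2 ≤ 4 * (4 * N + N ^ 2 * (2 / N)) :=
    le_trans (pow_le_pow_left₀ (by positivity) hlow 2) key
  have hδval : (N : ℝ) ^ 2 * (2 / N) = 2 * N := by field_simp
  have h24 : 24 < (N : ℝ) * ε ^ 2 := by
    rw [div_lt_iff₀ (pow_pos hε 2)] at hNR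
    linarith
  nlinarith [mul_lt_mul_of_pos_left h24 hNpos, hsq, hδval, hNpos]


end Stmt10Aux

open Stmt10Aux in
/-- For a strictly stationary `ℝ^d`-valued random field, if
`E[e^{i(X_{t_n}^{(j)} - X_0^{(k)})}] → E[e^{iX_0^{(j)}}] E[e^{-iX_0^{(k)}}]` for all
`j, k` and all sequences with `‖t_n‖_∞ → ∞`, then also
`E[e^{i(X_{t_n}^{(j)} + X_0^{(k)})}] → E[e^{iX_0^{(j)}}] E[e^{iX_0^{(k)}}]` for all such
`j, k` and sequences. -/
theorem stmt_10 {Ω : Type*} [MeasurableSpace Ω] {l d : ℕ} (P : Measure Ω)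
    [IsProbabilityMeasure P] (X : (Fin l → ℝ) → Ω → (Fin d → ℝ))
    (hmeas : ∀ t, Measurable (X t))
    (hstat : IsStationaryField P X)
    (hminus : ∀ (j k : Fin d) (t : ℕ → (Fin l → ℝ)),
      Tendsto (fun n => ‖t n‖) atTop atTop →
      Tendsto (fun n =>
          ∫ ω, Complex.exp (Complex.I * ((X (t n) ω j - X 0 ω k : ℝ) : ℂ)) ∂P)
        atTop (nhds ((∫ ω, Complex.exp (Complex.I * ((X 0 ω j : ℝ) : ℂ)) ∂P) *
          (∫ ω, Complex.exp (-Complex.I * ((X 0 ω k : ℝ) : ℂ)) ∂P)))) :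
    ∀ (j k : Fin d) (t : ℕ → (Fin l → ℝ)),
      Tendsto (fun n => ‖t n‖) atTop atTop →
      Tendsto (fun n =>
          ∫ ω, Complex.exp (Complex.I * ((X (t n) ω j + X 0 ω k : ℝ) : ℂ)) ∂P)
        atTop (nhds ((∫ ω, Complex.exp (Complex.I * ((X 0 ω j : ℝ) : ℂ)) ∂P) *
          (∫ ω, Complex.exp (Complex.I * ((X 0 ω k : ℝ) : ℂ)) ∂P))) := by
  intro j k t ht
  have hconj : ∀ x : ℝ, Complex.exp (-Complex.I * (x : ℂ)) = (starRingEnd ℂ) (eC x) := by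
    intro x
    rw [conj_eC, eC]
    push_cast
    ring_nf
  have hAseq : ∀ t' : ℕ → (Fin l → ℝ), Tendsto (fun n => ‖t' n‖) atTop atTop →
      Tendsto (fun n => ∫ ω, eC (X (t' n) ω j - X 0 ω j) ∂P) atTop
        (nhds ((∫ ω, eC (X 0 ω j) ∂P) *
          (starRingEnd ℂ) (∫ ω, eC (X 0 ω j) ∂P))) := by
    intro t' ht'
    have h := hminus j j t' ht'
    have hcc : (∫ ω, Complex.exp (-Complex.I * ((X 0 ω j : ℝ) : ℂ)) ∂P)
        = (starRingEnd ℂ) (∫ ω, eC (X 0 ω j) ∂P) := by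
      simp_rw [hconj]
      rw [integral_conj]
    rw [hcc] at h
    exact h
  have hA := unif (F := fun u => ∫ ω, eC (X u ω j - X 0 ω j) ∂P)
    (L := (∫ ω, eC (X 0 ω j) ∂P) * (starRingEnd ℂ) (∫ ω, eC (X 0 ω j) ∂P)) hAseq
  have key := main_key P X hmeas hstat j k hA
  rw [Metric.tendsto_atTop]
  intro ε hε
  obtain ⟨R, hR⟩ := key (ε / 2) (by positivity)
  obtain ⟨N0, hN0⟩ := eventually_atTop.mp (ht.eventually_ge_atTop R)
  refine ⟨N0, fun n hn => ?_⟩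
  rw [dist_eq_norm]
  calc ‖(∫ ω, eC (X (t n) ω j + X 0 ω k) ∂P) -
        (∫ ω, eC (X 0 ω j) ∂P) * (∫ ω, eC (X 0 ω k) ∂P)‖ ≤ ε / 2 := hR (t n) (hN0 n hn)
    _ < ε := by linarith

end
end
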